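/- arXiv:1202.1188 — 4 statements merged into one kernel-verified Lean document; each statement's English description precedes it below -/
import Mathlib

section
/- As d → ∞, ∏_{i=1}^d L(2i+1) ∼ C·√d, i.e., lim_{d→∞} (∏_{i=1}^d L(2i+1))/√d = C, where C = 2^{1/6}·e^{1/2}·π/A⁶. -/
open Filter Finset Real

namespace Dimer

/-- The kernel `L(d) = Γ((d-1)/2)² Γ((d+1)/2)² / Γ(d/2)⁴`. -/
noncomputable def Lker (d : ℝ) : ℝ :=
  Real.Gamma ((d - 1) / 2) ^ 2 * Real.Gamma ((d + 1) / 2) ^ 2 / Real.Gamma (d / 2) ^ 4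

/-- The kernel `U(d) = Γ((d-1)/2)² Γ((d+1)/2)² / (Γ(d/2-1) Γ(d/2)² Γ(d/2+1))`. -/
noncomputable def Uker (d : ℝ) : ℝ :=
  Real.Gamma ((d - 1) / 2) ^ 2 * Real.Gamma ((d + 1) / 2) ^ 2 /
    (Real.Gamma (d / 2 - 1) * Real.Gamma (d / 2) ^ 2 * Real.Gamma (d / 2 + 1))

/-- The Pochhammer symbol `(a)_n = a(a+1)⋯(a+n-1)`. -/
noncomputable def poch (a : ℝ) (n : ℕ) : ℝ := ∏ j ∈ Finset.range n, (a + (j : ℝ))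

/-- `A` is the Glaisher–Kinkelin constant:
`lim_{n→∞} (0!·1!⋯(n-1)!) · n^{-n²/2+1/12} · (2π)^{-n/2} · e^{3n²/4} = e^{1/12}/A`. -/
def IsGlaisher (A : ℝ) : Prop :=
  Filter.Tendsto (fun n : ℕ =>
      (∏ i ∈ Finset.range n, (Nat.factorial i : ℝ)) *
        (n : ℝ) ^ (-(n : ℝ) ^ 2 / 2 + 1 / 12) * (2 * Real.pi) ^ (-(n : ℝ) / 2) *
        Real.exp (3 * (n : ℝ) ^ 2 / 4))
    Filter.atTop (nhds (Real.exp (1 / 12) / A))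

end Dimer

namespace S14
open Dimer

noncomputable def F (n : ℕ) : ℝ := ∏ i ∈ Finset.range n, (Nat.factorial i : ℝ)

lemma F_pos (n : ℕ) : 0 < F n := Finset.prod_pos fun i _ => by positivity

lemma F_succ (n : ℕ) : F (n+1) = F n * (Nat.factorial n : ℝ) := Finset.prod_range_succ _ _

noncomputable def gg (n : ℕ) : ℝ :=
  F n * (n:ℝ) ^ (-(n:ℝ)^2/2 + 1/12) * (2*π) ^ (-(n:ℝ)/2) * Real.exp (3*(n:ℝ)^2/4)

noncomputable def hfun (d : ℕ) : ℝ :=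
  (3*(d:ℝ)^2+6*(d:ℝ)+5/2) * Real.log (1+1/(d:ℝ))
    - (4*(d:ℝ)^2+4*(d:ℝ)+5/6) * Real.log (1+1/(2*(d:ℝ))) - (d:ℝ) - 3

lemma Gamma_half (n : ℕ) : Real.Gamma ((n:ℝ) + 1/2) =
    (Nat.factorial (2*n) : ℝ) * Real.sqrt π / (4^n * (Nat.factorial n : ℝ)) := by
  induction n with
  | zero => rw [show ((0:ℕ):ℝ)+1/2 = 1/2 by norm_num, Real.Gamma_one_half_eq]; simp
  | succ n ih =>
    have h1 : ((n:ℝ)+1) + 1/2 = ((n:ℝ) + 1/2) + 1 := by ring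
    have h2 : Real.Gamma (((n:ℝ) + 1/2) + 1) = ((n:ℝ)+1/2) * Real.Gamma ((n:ℝ)+1/2) :=
      Real.Gamma_add_one (by positivity)
    push_cast
    rw [h1, h2, ih]
    have e1 : (Nat.factorial (2*(n+1)) : ℝ) = (2*(n:ℝ)+2) * (2*(n:ℝ)+1) * (Nat.factorial (2*n) : ℝ) := by
      have : 2*(n+1) = (2*n+1)+1 := by ring
      rw [this, Nat.factorial_succ, Nat.factorial_succ]; push_cast; ring
    have e2 : (Nat.factorial (n+1) : ℝ) = ((n:ℝ)+1) * (Nat.factorial n : ℝ) := by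
      rw [Nat.factorial_succ]; push_cast; ring
    rw [e1, e2]
    have hf : (Nat.factorial n : ℝ) ≠ 0 := by positivity
    have h4 : (4:ℝ)^(n+1) = 4 * 4^n := by ring
    push_cast
    rw [h4]
    field_simp
    ring
lemma Lker_eq (k : ℕ) : Lker (2*((k:ℝ)+1)+1) =
    (Nat.factorial k : ℝ)^2 * (Nat.factorial (k+1) : ℝ)^6 * 2^(8*(k+1)) /
      (π^2 * (Nat.factorial (2*(k+1)) : ℝ)^4) := by
  have h1 : (2*((k:ℝ)+1)+1 - 1)/2 = (k:ℝ) + 1 := by ring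
  have h2 : (2*((k:ℝ)+1)+1 + 1)/2 = ((k+1:ℕ):ℝ) + 1 := by push_cast; ring
  have h3 : (2*((k:ℝ)+1)+1)/2 = ((k+1:ℕ):ℝ) + 1/2 := by push_cast; ring
  have g1 : Real.Gamma ((k:ℝ)+1) = (Nat.factorial k : ℝ) := Real.Gamma_nat_eq_factorial k
  have g2 : Real.Gamma (((k+1:ℕ):ℝ)+1) = (Nat.factorial (k+1) : ℝ) := Real.Gamma_nat_eq_factorial (k+1)
  rw [Lker, h1, h2, h3, g1, g2, Gamma_half (k+1)]
  have hs : Real.sqrt π ^ 4 = π ^ 2 := by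
    rw [show (4:ℕ) = 2*2 by norm_num, pow_mul, Real.sq_sqrt Real.pi_pos.le]
  have hf1 : (Nat.factorial (k+1) : ℝ) ≠ 0 := by positivity
  have hf2 : (Nat.factorial (2*(k+1)) : ℝ) ≠ 0 := by positivity
  have hpi : Real.sqrt π ≠ 0 := by positivity
  have h4 : ((4:ℝ)^(k+1))^4 = 2^(8*(k+1)) := by
    rw [← pow_mul, show (4:ℝ) = 2^2 by norm_num, ← pow_mul]; ring_nf
  rw [div_pow, mul_pow, mul_pow, hs]
  rw [← h4]
  field_simp
lemma prod_eq (d : ℕ) : (∏ i ∈ Finset.Icc 1 d, Lker (2*(i:ℝ)+1)) =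
    F d ^2 * F (d+1)^6 * 2^(4*(d*(d+1))) /
      (π^(2*d) * (F (2*d+1) * 2^d * (Nat.factorial d : ℝ))^2) := by
  induction d with
  | zero => simp [F]
  | succ d ih =>
    rw [Finset.prod_Icc_succ_top (Nat.le_add_left 1 d)]
    rw [ih, show ((d+1:ℕ):ℝ) = (d:ℝ)+1 by push_cast; ring, Lker_eq d]
    have e1 : F (d+2) = F (d+1) * (Nat.factorial (d+1) : ℝ) := F_succ (d+1)
    have e2 : F (d+1) = F d * (Nat.factorial d : ℝ) := F_succ d
    have e3 : F (2*(d+1)+1) = F (2*d+1) * (Nat.factorial (2*d+1) : ℝ) * (Nat.factorial (2*d+2) : ℝ) := by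
      rw [show 2*(d+1)+1 = (2*d+1)+1+1 by ring, F_succ, F_succ]
    have e4 : (Nat.factorial (d+1) : ℝ) = ((d:ℝ)+1) * (Nat.factorial d : ℝ) := by
      rw [Nat.factorial_succ]; push_cast; ring
    have e5 : (Nat.factorial (2*d+2) : ℝ) = (2*(d:ℝ)+2) * (Nat.factorial (2*d+1) : ℝ) := by
      rw [show 2*d+2 = (2*d+1)+1 by ring, Nat.factorial_succ]; push_cast; ring
    have e6 : (Nat.factorial (2*(d+1)) : ℝ) = (Nat.factorial (2*d+2) : ℝ) := by norm_num; ring_nf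
    have p1 : (2:ℝ)^(4*((d+1)*(d+2))) = 2^(4*(d*(d+1))) * 2^(8*(d+1)) := by
      rw [← pow_add]; congr 1; ring
    have p2 : (π:ℝ)^(2*(d+1)) = π^(2*d) * π^2 := by
      rw [show 2*(d+1) = 2*d+2 by ring, pow_add]
    have p3 : (2:ℝ)^(d+1) = 2^d * 2 := by ring
    have hπ : (π:ℝ) ≠ 0 := Real.pi_ne_zero
    have hFd : F (2*d+1) ≠ 0 := (F_pos _).ne'
    have hfd : (Nat.factorial d : ℝ) ≠ 0 := by positivity
    have hf2d : (Nat.factorial (2*d+1) : ℝ) ≠ 0 := by positivity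
    have h2 : (2:ℝ)^d ≠ 0 := by positivity
    have h3 : (2:ℝ)^(4*(d*(d+1))) ≠ 0 := by positivity
    have h8 : (2:ℝ)^(8*(d+1)) ≠ 0 := by positivity
    have hπd : (π:ℝ)^(2*d) ≠ 0 := by positivity
    rw [show d+1+1 = d+2 from rfl, e1, e3, e6, e5, e4, e2, p1, p2, p3]
    field_simp
lemma pade {t : ℝ} (ht : 0 ≤ t) : 3*t*(2+t)/(6+6*t+t^2) ≤ Real.log (1+t) := by
  set φ : ℝ → ℝ := fun s => Real.log (1+s) - 3*s*(2+s)/(6+6*s+s^2) with hφ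
  set φ' : ℝ → ℝ := fun s => s^4/((1+s)*(6+6*s+s^2)^2) with hφ'
  have hder : ∀ s ∈ Set.uIcc 0 t, HasDerivAt φ (φ' s) s := by
    intro s hs
    rw [Set.uIcc_of_le ht] at hs
    have hs0 : 0 ≤ s := hs.1
    have h1 : (0:ℝ) < 1 + s := by linarith
    have h2 : (0:ℝ) < 6 + 6*s + s^2 := by positivity
    have d1 : HasDerivAt (fun s : ℝ => Real.log (1+s)) (1/(1+s)) s := by
      have := ((hasDerivAt_id s).const_add (1:ℝ)).log h1.ne'
      simpa using this
    have d2 : HasDerivAt (fun s : ℝ => 3*s*(2+s)/(6+6*s+s^2))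
        (((6+6*s)*(6+6*s+s^2) - (3*s*(2+s))*(6+2*s))/(6+6*s+s^2)^2) s := by
      have dn : HasDerivAt (fun s : ℝ => 3*s*(2+s)) (6+6*s) s := by
        have h := (((hasDerivAt_id s).const_mul 3).mul ((hasDerivAt_id s).const_add 2))
        simp only [id] at h
        exact h.congr_deriv (by ring)
      have dd : HasDerivAt (fun s : ℝ => 6+6*s+s^2) (6+2*s) s := by
        have h := (((hasDerivAt_const s (6:ℝ)).add ((hasDerivAt_id s).const_mul 6)).add
            (hasDerivAt_pow 2 s))
        simp only [id] at h
        exact h.congr_deriv (by norm_num)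
      exact dn.div dd h2.ne'
    have := d1.sub d2
    refine this.congr_deriv ?_
    rw [hφ']
    field_simp
    ring
  have hint : IntervalIntegrable φ' MeasureTheory.volume 0 t := by
    apply ContinuousOn.intervalIntegrable
    apply ContinuousOn.div
    · fun_prop
    · fun_prop
    · intro s hs
      rw [Set.uIcc_of_le ht] at hs
      have h1 : (0:ℝ) < 1 + s := by linarith [hs.1]
      have h2 : (0:ℝ) < 6 + 6*s + s^2 := by nlinarith [hs.1]
      positivity
  have heq := intervalIntegral.integral_eq_sub_of_hasDerivAt hder hint
  have hnn : 0 ≤ ∫ s in (0:ℝ)..t, φ' s := by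
    apply intervalIntegral.integral_nonneg ht
    intro s hs
    have : (0:ℝ) < 1 + s := by linarith [hs.1]
    positivity
  rw [heq] at hnn
  have hφ0 : φ 0 = 0 := by simp [hφ]
  rw [hφ0, sub_zero] at hnn
  have := sub_nonneg.mp hnn
  linarith [this]

lemma pade' (n : ℕ) (hn : 1 ≤ n) :
    (2*(n:ℝ)+1)/4 ≤ ((n:ℝ)*((n:ℝ)+1)/2 + 1/12) * (Real.log ((n:ℝ)+1) - Real.log n) := by
  have hn0 : (0:ℝ) < n := by exact_mod_cast hn
  have h1 : Real.log ((n:ℝ)+1) - Real.log n = Real.log (1 + 1/(n:ℝ)) := by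
    rw [← Real.log_div (by positivity) hn0.ne']
    congr 1; field_simp
  rw [h1]
  have hp := pade (t := 1/(n:ℝ)) (by positivity)
  have key : ((n:ℝ)*((n:ℝ)+1)/2 + 1/12) * (3*(1/(n:ℝ))*(2+1/(n:ℝ))/(6+6*(1/(n:ℝ))+(1/(n:ℝ))^2))
      = (2*(n:ℝ)+1)/4 := by
    have h2 : (0:ℝ) < 6+6*(1/(n:ℝ))+(1/(n:ℝ))^2 := by positivity
    field_simp
    ring
  calc (2*(n:ℝ)+1)/4 = ((n:ℝ)*((n:ℝ)+1)/2 + 1/12) *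
        (3*(1/(n:ℝ))*(2+1/(n:ℝ))/(6+6*(1/(n:ℝ))+(1/(n:ℝ))^2)) := key.symm
    _ ≤ _ := by
        apply mul_le_mul_of_nonneg_left hp
        positivity

lemma sum_ilogi_le (n : ℕ) (hn : 1 ≤ n) :
    ∑ i ∈ Finset.range n, ((i:ℝ)+1)*Real.log ((i:ℝ)+1) ≤
      (n:ℝ)^2/2 * Real.log n - (n:ℝ)^2/4 + 1/4 + (1/12)*Real.log n + (n:ℝ)/2*Real.log n := by
  induction n with
  | zero => omega
  | succ n ih =>
    rcases Nat.eq_or_lt_of_le hn with h1 | h1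
    · simp [← h1]
    · have hn1 : 1 ≤ n := by omega
      have ih' := ih hn1
      rw [Finset.sum_range_succ]
      have hp := pade' n hn1
      have hc : ((n+1:ℕ):ℝ) = (n:ℝ)+1 := by push_cast; ring
      rw [hc]
      nlinarith [hp, ih']

lemma stirling_lower (n : ℕ) (hn : 1 ≤ n) :
    Real.log (Real.sqrt π) + 1/2*Real.log (2*(n:ℝ)) + (n:ℝ)*Real.log n - (n:ℝ)
      ≤ Real.log (Nat.factorial n : ℝ) := by
  obtain ⟨m, rfl⟩ : ∃ m, n = m+1 := ⟨n-1, by omega⟩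
  have hanti := Stirling.stirlingSeq'_antitone
  have htend : Filter.Tendsto (Stirling.stirlingSeq ∘ Nat.succ) Filter.atTop (nhds (Real.sqrt π)) :=
    Stirling.tendsto_stirlingSeq_sqrt_pi.comp (Filter.tendsto_add_atTop_nat 1)
  have hle : Real.sqrt π ≤ Stirling.stirlingSeq (m+1) := hanti.le_of_tendsto htend m
  have hpos : 0 < Stirling.stirlingSeq (m+1) := Stirling.stirlingSeq'_pos m
  have hlog : Real.log (Real.sqrt π) ≤ Real.log (Stirling.stirlingSeq (m+1)) :=
    Real.log_le_log (Real.sqrt_pos.mpr Real.pi_pos) hle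
  rw [Stirling.log_stirlingSeq_formula] at hlog
  have hm1 : (0:ℝ) < ((m+1:ℕ):ℝ) := by positivity
  have hdiv : Real.log (((m+1:ℕ):ℝ) / Real.exp 1) = Real.log ((m+1:ℕ):ℝ) - 1 := by
    rw [Real.log_div hm1.ne' (Real.exp_ne_zero 1), Real.log_exp]
  rw [hdiv] at hlog
  have : (1:ℝ)*((m+1:ℕ):ℝ) = ((m+1:ℕ):ℝ) := one_mul _
  push_cast at hlog ⊢
  linarith [hlog]

lemma hyperfact (n : ℕ) : F n * ∏ i ∈ Finset.range n, ((i:ℝ)+1)^(i+1) = (Nat.factorial n : ℝ)^n := by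
  induction n with
  | zero => simp [F]
  | succ n ih =>
    rw [F_succ, Finset.prod_range_succ]
    have e4 : (Nat.factorial (n+1) : ℝ) = ((n:ℝ)+1) * (Nat.factorial n : ℝ) := by
      rw [Nat.factorial_succ]; push_cast; ring
    rw [e4]
    rw [mul_pow, pow_succ, pow_succ]
    calc F n * ↑n.factorial * ((∏ i ∈ Finset.range n, ((i:ℝ) + 1) ^ (i + 1)) * (((n:ℝ) + 1) ^ n * ((n:ℝ) + 1)))
        = (F n * ∏ i ∈ Finset.range n, ((i:ℝ) + 1) ^ (i + 1)) * (↑n.factorial * (((n:ℝ) + 1) ^ n * ((n:ℝ) + 1))) := by ring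
      _ = (↑n.factorial ^ n) * (↑n.factorial * (((n:ℝ) + 1) ^ n * ((n:ℝ) + 1))) := by rw [ih]
      _ = ((n:ℝ) + 1) ^ n * ((n:ℝ) + 1) * (↑n.factorial ^ n * ↑n.factorial) := by ring

lemma gg_lower (n : ℕ) (hn : 1 ≤ n) : Real.exp (-(1:ℝ)/4) ≤ gg n := by
  have hn0 : (0:ℝ) < n := by exact_mod_cast hn
  have hFp := F_pos n
  have hgpos : 0 < gg n := by
    unfold gg
    have h1 : (0:ℝ) < (n:ℝ) ^ (-(n:ℝ)^2/2 + 1/12) := Real.rpow_pos_of_pos hn0 _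
    have h2 : (0:ℝ) < (2*π) ^ (-(n:ℝ)/2) := Real.rpow_pos_of_pos (by positivity) _
    positivity
  rw [← Real.exp_log hgpos]
  apply Real.exp_le_exp.mpr
  have hlog : Real.log (gg n) = Real.log (F n) + (-(n:ℝ)^2/2+1/12)*Real.log n
      + (-(n:ℝ)/2)*Real.log (2*π) + 3*(n:ℝ)^2/4 := by
    unfold gg
    rw [Real.log_mul (by positivity) (Real.exp_ne_zero _),
      Real.log_mul (by positivity) (Real.rpow_pos_of_pos (by positivity) _).ne',
      Real.log_mul hFp.ne' (Real.rpow_pos_of_pos hn0 _).ne',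
      Real.log_rpow hn0, Real.log_rpow (by positivity), Real.log_exp]
  have hprodpos : ∀ i ∈ Finset.range n, ((i:ℝ)+1)^(i+1) ≠ 0 := fun i _ => by positivity
  have hF : Real.log (F n) = (n:ℝ)*Real.log (Nat.factorial n : ℝ)
      - ∑ i ∈ Finset.range n, ((i:ℝ)+1)*Real.log ((i:ℝ)+1) := by
    have h := congrArg Real.log (hyperfact n)
    rw [Real.log_mul hFp.ne' (Finset.prod_ne_zero_iff.mpr hprodpos),
      Real.log_prod hprodpos, Real.log_pow] at h
    simp only [Real.log_pow] at h
    push_cast at h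
    linarith [h]
  have hst := stirling_lower n hn
  have hsum := sum_ilogi_le n hn
  have h2pi : Real.log (2*π) = Real.log 2 + Real.log π :=
    Real.log_mul two_ne_zero Real.pi_ne_zero
  have h2n : Real.log (2*(n:ℝ)) = Real.log 2 + Real.log n :=
    Real.log_mul two_ne_zero hn0.ne'
  have hsq : Real.log (Real.sqrt π) = Real.log π / 2 := Real.log_sqrt Real.pi_pos.le
  rw [hlog, hF, h2pi]
  rw [h2n, hsq] at hst
  nlinarith [mul_le_mul_of_nonneg_left hst hn0.le, hsum]
lemma taylor2 {t : ℝ} (h0 : 0 < t) (h1 : t ≤ 1/2) :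
    |Real.log (1+t) - t + t^2/2| ≤ 2*t^3 := by
  have habs : |(-t)| < 1 := by rw [abs_neg, abs_of_pos h0]; linarith
  have h := Real.abs_log_sub_add_sum_range_le habs 2
  have hs : (∑ i ∈ Finset.range 2, (-t) ^ (i + 1) / (i + 1)) = -t + t^2/2 := by
    simp [Finset.sum_range_succ]
    ring
  rw [hs, abs_neg, abs_of_pos h0] at h
  have he : -t + t^2/2 + Real.log (1 - -t) = Real.log (1+t) - t + t^2/2 := by
    rw [sub_neg_eq_add]; ring
  rw [he] at h
  have h3 : t^(2+1) = t^3 := by norm_num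
  rw [h3] at h
  calc |Real.log (1+t) - t + t^2/2| ≤ t^3/(1-t) := h
    _ ≤ 2*t^3 := by
      rw [div_le_iff₀ (by linarith)]
      nlinarith [mul_nonneg (mul_nonneg h0.le (mul_nonneg h0.le h0.le)) (by linarith : (0:ℝ) ≤ 1-2*t)]
lemma taylor1 {t : ℝ} (h0 : 0 < t) (h1 : t ≤ 1/2) :
    |Real.log (1+t) - t| ≤ 2*t^2 := by
  have habs : |(-t)| < 1 := by rw [abs_neg, abs_of_pos h0]; linarith
  have h := Real.abs_log_sub_add_sum_range_le habs 1
  have hs : (∑ i ∈ Finset.range 1, (-t) ^ (i + 1) / (i + 1)) = -t := by simp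
  rw [hs, abs_neg, abs_of_pos h0] at h
  have he : -t + Real.log (1 - -t) = Real.log (1+t) - t := by rw [sub_neg_eq_add]; ring
  rw [he] at h
  have h3 : t^(1+1) = t^2 := by norm_num
  rw [h3] at h
  calc |Real.log (1+t) - t| ≤ t^2/(1-t) := h
    _ ≤ 2*t^2 := by
      rw [div_le_iff₀ (by linarith)]
      nlinarith [mul_nonneg (mul_nonneg h0.le h0.le) (by linarith : (0:ℝ) ≤ 1-2*t)]
lemma taylor0 {t : ℝ} (h0 : 0 < t) (h1 : t ≤ 1/2) :
    |Real.log (1+t)| ≤ 2*t := by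
  have habs : |(-t)| < 1 := by rw [abs_neg, abs_of_pos h0]; linarith
  have h := Real.abs_log_sub_add_sum_range_le habs 0
  simp only [Finset.range_zero, Finset.sum_empty, zero_add, pow_one, abs_neg,
    abs_of_pos h0] at h
  have he : Real.log (1 - -t) = Real.log (1+t) := by rw [sub_neg_eq_add]
  rw [he] at h
  calc |Real.log (1+t)| ≤ t/(1-t) := h
    _ ≤ 2*t := by
      rw [div_le_iff₀ (by linarith)]
      nlinarith [mul_nonneg h0.le (by linarith : (0:ℝ) ≤ 1-2*t)]

lemma h_tendsto : Filter.Tendsto hfun Filter.atTop (nhds 0) := by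
  refine squeeze_zero_norm' (a := fun d : ℕ => 41/(d:ℝ)) ?_ (tendsto_const_div_atTop_nhds_zero_nat 41)
  · filter_upwards [Filter.eventually_ge_atTop 2] with d hd
    have hD : (2:ℝ) ≤ (d:ℝ) := by exact_mod_cast hd
    have hD0 : (0:ℝ) < (d:ℝ) := by linarith
    set D := (d:ℝ) with hDdef
    have ht1 : (0:ℝ) < 1/D := by positivity
    have ht1' : 1/D ≤ 1/2 := by rw [div_le_div_iff₀ hD0 two_pos]; linarith
    have ht2 : (0:ℝ) < 1/(2*D) := by positivity
    have ht2' : 1/(2*D) ≤ 1/2 := by rw [div_le_div_iff₀ (by positivity) two_pos]; linarith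
    set u := Real.log (1+1/D) with hu
    set v := Real.log (1+1/(2*D)) with hv
    -- six pieces
    have b1 : |D^2*u - D + 1/2| ≤ 2/D := by
      have h := taylor2 ht1 ht1'
      have e : D^2*u - D + 1/2 = D^2*(u - 1/D + (1/D)^2/2) := by
        field_simp
      rw [e, abs_mul, abs_of_nonneg (by positivity : (0:ℝ) ≤ D^2)]
      calc D^2 * |u - 1/D + (1/D)^2/2| ≤ D^2 * (2*(1/D)^3) := by
            exact mul_le_mul_of_nonneg_left h (by positivity)
        _ = 2/D := by field_simp
    have b2 : |D*u - 1| ≤ 2/D := by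
      have h := taylor1 ht1 ht1'
      have e : D*u - 1 = D*(u - 1/D) := by field_simp
      rw [e, abs_mul, abs_of_nonneg hD0.le]
      calc D * |u - 1/D| ≤ D * (2*(1/D)^2) :=
            mul_le_mul_of_nonneg_left h hD0.le
        _ = 2/D := by field_simp
    have b3 : |u| ≤ 2/D := by
      have h := taylor0 ht1 ht1'
      calc |u| ≤ 2*(1/D) := h
        _ = 2/D := by ring
    have b4 : |D^2*v - D/2 + 1/8| ≤ 2/D := by
      have h := taylor2 ht2 ht2'
      have e : D^2*v - D/2 + 1/8 = D^2*(v - 1/(2*D) + (1/(2*D))^2/2) := by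
        field_simp
        ring
      rw [e, abs_mul, abs_of_nonneg (by positivity : (0:ℝ) ≤ D^2)]
      calc D^2 * |v - 1/(2*D) + (1/(2*D))^2/2| ≤ D^2 * (2*(1/(2*D))^3) := by
            exact mul_le_mul_of_nonneg_left h (by positivity)
        _ = 1/(4*D) := by field_simp; ring
        _ ≤ 2/D := by rw [div_le_div_iff₀ (by positivity) hD0]; nlinarith
    have b5 : |D*v - 1/2| ≤ 2/D := by
      have h := taylor1 ht2 ht2'
      have e : D*v - 1/2 = D*(v - 1/(2*D)) := by field_simp
      rw [e, abs_mul, abs_of_nonneg hD0.le]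
      calc D * |v - 1/(2*D)| ≤ D * (2*(1/(2*D))^2) :=
            mul_le_mul_of_nonneg_left h hD0.le
        _ = 1/(2*D) := by field_simp
        _ ≤ 2/D := by rw [div_le_div_iff₀ (by positivity) hD0]; nlinarith
    have b6 : |v| ≤ 2/D := by
      have h := taylor0 ht2 ht2'
      calc |v| ≤ 2*(1/(2*D)) := h
        _ = 1/D := by field_simp
        _ ≤ 2/D := by rw [div_le_div_iff₀ hD0 hD0]; nlinarith
    have hid : hfun d = 3*(D^2*u - D + 1/2) + 6*(D*u - 1) + (5/2)*u
        - 4*(D^2*v - D/2 + 1/8) - 4*(D*v - 1/2) - (5/6)*v := by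
      rw [hfun]; ring
    rw [Real.norm_eq_abs, hid]
    simp only [show (2:ℝ)/D = 2*(1/D) by ring] at b1 b2 b3 b4 b5 b6
    have h41 : (41:ℝ)/(d:ℝ) = 41*(1/D) := by rw [hDdef]; ring
    rw [h41]
    have l1 := abs_le.mp b1
    have l2 := abs_le.mp b2
    have l3 := abs_le.mp b3
    have l4 := abs_le.mp b4
    have l5 := abs_le.mp b5
    have l6 := abs_le.mp b6
    rw [abs_le]
    constructor <;> [linarith [l1.1, l2.1, l3.1, l4.2, l5.2, l6.2];
      linarith [l1.2, l2.2, l3.2, l4.1, l5.1, l6.1]]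
lemma gg_pos {n : ℕ} (hn : 1 ≤ n) : 0 < gg n := by
  have hn0 : (0:ℝ) < n := by exact_mod_cast hn
  unfold gg
  have h1 : (0:ℝ) < (n:ℝ) ^ (-(n:ℝ)^2/2 + 1/12) := Real.rpow_pos_of_pos hn0 _
  have h2 : (0:ℝ) < (2*π) ^ (-(n:ℝ)/2) := Real.rpow_pos_of_pos (by positivity) _
  have := F_pos n
  positivity

lemma log_gg {n : ℕ} (hn : 1 ≤ n) : Real.log (gg n) = Real.log (F n)
    + (-(n:ℝ)^2/2+1/12)*Real.log n + (-(n:ℝ)/2)*(Real.log 2 + Real.log π) + 3*(n:ℝ)^2/4 := by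
  have hn0 : (0:ℝ) < n := by exact_mod_cast hn
  unfold gg
  rw [Real.log_mul (by
      have h1 : (0:ℝ) < (n:ℝ) ^ (-(n:ℝ)^2/2 + 1/12) := Real.rpow_pos_of_pos hn0 _
      have h2 : (0:ℝ) < (2*π) ^ (-(n:ℝ)/2) := Real.rpow_pos_of_pos (by positivity) _
      have := F_pos n
      positivity) (Real.exp_ne_zero _),
    Real.log_mul (by
      have h1 : (0:ℝ) < (n:ℝ) ^ (-(n:ℝ)^2/2 + 1/12) := Real.rpow_pos_of_pos hn0 _
      have := F_pos n
      positivity) (Real.rpow_pos_of_pos (by positivity) _).ne',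
    Real.log_mul (F_pos n).ne' (Real.rpow_pos_of_pos hn0 _).ne',
    Real.log_rpow hn0, Real.log_rpow (by positivity), Real.log_exp,
    Real.log_mul two_ne_zero Real.pi_ne_zero]


lemma log_helperL {a1 a2 a3 f D : ℝ} (h1 : 0 < a1) (h2 : 0 < a2) (h3 : 0 < a3) (hf : 0 < f)
    (e1 e2 k : ℕ) (hD : 0 < D) :
    Real.log (a1^2*a2^6*2^e1/(π^e2*(a3*2^k*f)^2)/Real.sqrt D)
      = 2*Real.log a1 + 6*Real.log a2 + (e1:ℝ)*Real.log 2 - (e2:ℝ)*Real.log π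
        - 2*(Real.log a3 + (k:ℝ)*Real.log 2 + Real.log f) - Real.log D/2 := by
  have hπ := Real.pi_pos
  rw [Real.log_div (by positivity) (Real.sqrt_pos.mpr hD).ne', Real.log_sqrt hD.le]
  rw [Real.log_div (by positivity) (by positivity)]
  rw [Real.log_mul (by positivity) (by positivity : (2:ℝ)^e1 ≠ 0)]
  rw [Real.log_mul (by positivity) (by positivity)]
  rw [Real.log_mul (by positivity : (π:ℝ)^e2 ≠ 0) (by positivity)]
  rw [show (a3*2^k*f)^2 = a3^2*(2^k)^2*f^2 by ring]
  rw [Real.log_mul (by positivity) (by positivity)]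
  rw [Real.log_mul (by positivity) (by positivity)]
  simp only [Real.log_pow]
  push_cast
  ring

lemma log_helperR {g1 g2 g3 st h : ℝ} (h1 : 0 < g1) (h2 : 0 < g2) (h3 : 0 < g3) (hs : 0 < st) :
    Real.log (g1^2*g2^6/(g3^2*st^2)*(2^((1:ℝ)/6)*π^2*Real.exp h))
      = 2*Real.log g1 + 6*Real.log g2 - 2*Real.log g3 - 2*Real.log st
        + (1/6)*Real.log 2 + 2*Real.log π + h := by
  have hπ := Real.pi_pos
  have hr : (0:ℝ) < 2^((1:ℝ)/6) := Real.rpow_pos_of_pos two_pos _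
  rw [Real.log_mul (by positivity) (by positivity)]
  rw [Real.log_div (by positivity) (by positivity)]
  rw [Real.log_mul (by positivity) (by positivity)]
  rw [Real.log_mul (by positivity) (by positivity)]
  rw [Real.log_mul (by positivity) (Real.exp_ne_zero _)]
  rw [Real.log_mul hr.ne' (by positivity)]
  rw [Real.log_pow, Real.log_pow, Real.log_pow, Real.log_pow, Real.log_pow,
    Real.log_rpow two_pos, Real.log_exp]
  push_cast
  ring

lemma key (d : ℕ) (hd : 1 ≤ d) :
    F d ^2 * F (d+1)^6 * 2^(4*(d*(d+1))) /
        (π^(2*d) * (F (2*d+1) * 2^d * (Nat.factorial d : ℝ))^2) / Real.sqrt d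
      = gg d^2 * gg (d+1)^6 / (gg (2*d+1)^2 * Stirling.stirlingSeq d^2)
          * (2^((1:ℝ)/6) * π^2 * Real.exp (hfun d)) := by
  have hD0 : (0:ℝ) < (d:ℝ) := by exact_mod_cast hd
  obtain ⟨m, rfl⟩ : ∃ m, d = m+1 := ⟨d-1, by omega⟩
  have hsp : 0 < Stirling.stirlingSeq (m+1) := Stirling.stirlingSeq'_pos m
  have hfac : (0:ℝ) < (Nat.factorial (m+1) : ℝ) := by positivity
  have g1 := gg_pos (n := m+1) (by omega)
  have g2 := gg_pos (n := m+1+1) (by omega)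
  have g3 := gg_pos (n := 2*(m+1)+1) (by omega)
  have lhs_eq := log_helperL (F_pos (m+1)) (F_pos (m+1+1)) (F_pos (2*(m+1)+1)) hfac
    (4*((m+1)*(m+1+1))) (2*(m+1)) (m+1) hD0
  have rhs_eq := log_helperR (h := hfun (m+1)) g1 g2 g3 hsp
  have hLpos : 0 < F (m+1) ^2 * F (m+1+1)^6 * 2^(4*((m+1)*(m+1+1))) /
      (π^(2*(m+1)) * (F (2*(m+1)+1) * 2^(m+1) * (Nat.factorial (m+1) : ℝ))^2)
        / Real.sqrt ((m+1:ℕ):ℝ) := by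
    have h1 := F_pos (m+1); have h2 := F_pos (m+1+1); have h3 := F_pos (2*(m+1)+1)
    have h4 : (0:ℝ) < Real.sqrt ((m+1:ℕ):ℝ) := Real.sqrt_pos.mpr (by positivity)
    have h5 := Real.pi_pos
    positivity
  have hRpos : 0 < gg (m+1)^2 * gg (m+1+1)^6 / (gg (2*(m+1)+1)^2 * Stirling.stirlingSeq (m+1)^2)
      * (2^((1:ℝ)/6) * π^2 * Real.exp (hfun (m+1))) := by
    have h5 := Real.pi_pos
    have h6 : (0:ℝ) < 2^((1:ℝ)/6) := Real.rpow_pos_of_pos two_pos _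
    positivity
  rw [← Real.exp_log hLpos, ← Real.exp_log hRpos]
  congr 1
  rw [lhs_eq, rhs_eq]
  have h2d : ((2*(m+1)+1 : ℕ):ℝ) = 2*((m:ℝ)+1)+1 := by push_cast; ring
  have hd1 : ((m+1+1 : ℕ):ℝ) = ((m:ℝ)+1)+1 := by push_cast; ring
  have hdc : ((m+1 : ℕ):ℝ) = (m:ℝ)+1 := by push_cast; ring
  have e1 : Real.log (2*((m+1:ℕ):ℝ)) = Real.log 2 + Real.log ((m:ℝ)+1) := by
    rw [hdc, Real.log_mul two_ne_zero (by positivity)]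
  have e2 : Real.log (((m+1:ℕ):ℝ) / Real.exp 1) = Real.log ((m:ℝ)+1) - 1 := by
    rw [Real.log_div (by rw [hdc]; positivity) (Real.exp_ne_zero 1), Real.log_exp, hdc]
  have e3 : Real.log (1 + 1/((m+1:ℕ):ℝ)) = Real.log (((m:ℝ)+1)+1) - Real.log ((m:ℝ)+1) := by
    rw [hdc, show (1:ℝ) + 1/((m:ℝ)+1) = (((m:ℝ)+1)+1)/((m:ℝ)+1) by field_simp,
      Real.log_div (by positivity) (by positivity)]
  have e4 : Real.log (1 + 1/(2*((m+1:ℕ):ℝ))) =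
      Real.log (2*((m:ℝ)+1)+1) - Real.log 2 - Real.log ((m:ℝ)+1) := by
    rw [hdc, show (1:ℝ) + 1/(2*((m:ℝ)+1)) = (2*((m:ℝ)+1)+1)/(2*((m:ℝ)+1)) by field_simp,
      Real.log_div (by positivity) (by positivity),
      Real.log_mul two_ne_zero (by positivity)]
    ring
  rw [log_gg (n := m+1) (by omega), log_gg (n := m+1+1) (by omega),
    log_gg (n := 2*(m+1)+1) (by omega), Stirling.log_stirlingSeq_formula,
    hfun, e3, e4, e1, e2, h2d, hd1, hdc]
  push_cast
  ring

end S14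

open Dimer Filter Finset Real in
/-- Proposition 7.1, eq. (7.1): `∏_{i=1}^d L(2i+1) ∼ C√d` as
`d → ∞`, with `C = 2^{1/6} e^{1/2} π / A⁶`. -/
theorem statement_14 (A : ℝ) (hA : IsGlaisher A) :
    Filter.Tendsto
      (fun d : ℕ => (∏ i ∈ Finset.Icc 1 d, Lker (2 * (i : ℝ) + 1)) / Real.sqrt d)
      Filter.atTop
      (nhds ((2 : ℝ) ^ ((1 : ℝ) / 6) * Real.exp (1 / 2) * Real.pi / A ^ 6)) := by
  have hgg : Filter.Tendsto S14.gg Filter.atTop (nhds (Real.exp (1/12) / A)) := hA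
  set c : ℝ := Real.exp (1/12) / A with hc
  have hc0 : 0 < c := by
    have hle : Real.exp (-(1:ℝ)/4) ≤ c := by
      refine ge_of_tendsto hgg ?_
      filter_upwards [Filter.eventually_ge_atTop 1] with n hn
      exact S14.gg_lower n hn
    exact lt_of_lt_of_le (Real.exp_pos _) hle
  have hgg1 : Filter.Tendsto (fun d : ℕ => S14.gg (d+1)) Filter.atTop (nhds c) :=
    hgg.comp (Filter.tendsto_add_atTop_nat 1)
  have h2dt : Filter.Tendsto (fun d : ℕ => 2*d+1) Filter.atTop Filter.atTop :=
    Filter.tendsto_atTop_mono (fun n => by simp only [id_eq]; omega) Filter.tendsto_id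
  have hgg2 : Filter.Tendsto (fun d : ℕ => S14.gg (2*d+1)) Filter.atTop (nhds c) :=
    hgg.comp h2dt
  have hst : Filter.Tendsto (fun d : ℕ => Stirling.stirlingSeq d ^ 2) Filter.atTop (nhds π) := by
    have h := Stirling.tendsto_stirlingSeq_sqrt_pi.pow 2
    rwa [Real.sq_sqrt Real.pi_pos.le] at h
  have hexp : Filter.Tendsto (fun d : ℕ => Real.exp (S14.hfun d)) Filter.atTop (nhds 1) := by
    have h := (Real.continuous_exp.tendsto 0).comp S14.h_tendsto
    simpa [Function.comp_def] using h
  have hden_ne : c^2*π ≠ 0 := by positivity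
  have hX : Filter.Tendsto (fun d : ℕ =>
      S14.gg d^2 * S14.gg (d+1)^6 / (S14.gg (2*d+1)^2 * Stirling.stirlingSeq d^2)
        * (2^((1:ℝ)/6)*π^2*Real.exp (S14.hfun d))) Filter.atTop
      (nhds (c^2*c^6/(c^2*π)*(2^((1:ℝ)/6)*π^2*1))) :=
    (((hgg.pow 2).mul (hgg1.pow 6)).div ((hgg2.pow 2).mul hst) hden_ne).mul
      (hexp.const_mul _)
  have hval : c^2*c^6/(c^2*π)*(2^((1:ℝ)/6)*π^2*1)
      = (2:ℝ)^((1:ℝ)/6) * Real.exp (1/2) * π / A^6 := by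
    have h1 : c^2*c^6/(c^2*π)*(2^((1:ℝ)/6)*π^2*1) = c^6*(2^((1:ℝ)/6)*π) := by
      field_simp
    rw [h1, hc, div_pow]
    have h2 : Real.exp (1/12)^(6:ℕ) = Real.exp (1/2) := by
      rw [← Real.exp_nat_mul]
      norm_num
    rw [h2]
    field_simp
  rw [← hval]
  refine hX.congr' ?_
  filter_upwards [Filter.eventually_ge_atTop 1] with d hd
  rw [← S14.key d hd, S14.prod_eq d]
end

section
/- As d → ∞, ∏_{i=1}^d U(2i+1) ∼ C′/√d, i.e., lim_{d→∞} √d · ∏_{i=1}^d U(2i+1) = C′, where C′ = C/2 and C = 2^{1/6}·e^{1/2}·π/A⁶. -/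
open Filter Finset Real

namespace DimerAux
open Dimer

lemma Gamma_half (j : ℕ) :
    Real.Gamma ((j:ℝ) + 1/2) = Real.sqrt π * (Nat.factorial (2*j)) / (4^j * Nat.factorial j) := by
  have h := Real.Gamma_mul_Gamma_add_half ((j:ℝ) + 1/2)
  have h1 : Real.Gamma ((j:ℝ) + 1/2 + 1/2) = Nat.factorial j := by
    rw [show (j:ℝ) + 1/2 + 1/2 = (j:ℝ) + 1 by ring, Real.Gamma_nat_eq_factorial]
  have h2 : Real.Gamma (2 * ((j:ℝ) + 1/2)) = Nat.factorial (2*j) := by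
    rw [show 2 * ((j:ℝ) + 1/2) = ((2*j : ℕ) : ℝ) + 1 by push_cast; ring,
      Real.Gamma_nat_eq_factorial]
  have h3 : (2:ℝ) ^ (1 - 2 * ((j:ℝ) + 1/2)) = (4^j : ℝ)⁻¹ := by
    rw [show (1 - 2 * ((j:ℝ) + 1/2)) = -(((2*j : ℕ):ℝ)) by push_cast; ring]
    rw [Real.rpow_neg (by norm_num), Real.rpow_natCast]
    rw [show ((2:ℝ)^(2*j) ) = 4^j by rw [pow_mul]; norm_num]
  rw [h1, h2, h3] at h
  have hfj : (Nat.factorial j : ℝ) ≠ 0 := Nat.cast_ne_zero.mpr (Nat.factorial_ne_zero j)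
  field_simp at h ⊢
  linarith [h]



lemma Uker_succ (j : ℕ) :
    Uker (2*((j:ℝ)+1)+1) =
      (Nat.factorial j : ℝ)^3 * (Nat.factorial (j+1))^4 * (Nat.factorial (j+2)) * 4^(4*j+4) /
      (π^2 * (Nat.factorial (2*j)) * (Nat.factorial (2*j+2))^2 * (Nat.factorial (2*j+4))) := by
  have e1 : (2*((j:ℝ)+1)+1 - 1)/2 = ((j:ℕ):ℝ) + 1 := by push_cast; ring
  have e2 : (2*((j:ℝ)+1)+1 + 1)/2 = (((j+1:ℕ)):ℝ) + 1 := by push_cast; ring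
  have e3 : (2*((j:ℝ)+1)+1)/2 - 1 = ((j:ℕ):ℝ) + 1/2 := by push_cast; ring
  have e5 : (2*((j:ℝ)+1)+1)/2 + 1 = (((j+2:ℕ)):ℝ) + 1/2 := by push_cast; ring
  have e4 : (2*((j:ℝ)+1)+1)/2 = (((j+1:ℕ)):ℝ) + 1/2 := by push_cast; ring
  unfold Uker
  rw [e1, e2, e3, e5, e4, Gamma_half, Gamma_half, Gamma_half,
    Real.Gamma_nat_eq_factorial, Real.Gamma_nat_eq_factorial]
  have h24 : 2*(j+2) = 2*j+4 := by ring
  have h22 : 2*(j+1) = 2*j+2 := by ring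
  rw [h24, h22]
  set s := Real.sqrt π with hs
  rw [show π = s^2 by rw [hs, Real.sq_sqrt Real.pi_pos.le]]
  have hsne : s ≠ 0 := by
    rw [hs]; positivity
  have f0 : (Nat.factorial j : ℝ) ≠ 0 := Nat.cast_ne_zero.mpr (Nat.factorial_ne_zero _)
  have f1 : (Nat.factorial (j+1) : ℝ) ≠ 0 := Nat.cast_ne_zero.mpr (Nat.factorial_ne_zero _)
  have f2 : (Nat.factorial (j+2) : ℝ) ≠ 0 := Nat.cast_ne_zero.mpr (Nat.factorial_ne_zero _)
  have f3 : (Nat.factorial (2*j) : ℝ) ≠ 0 := Nat.cast_ne_zero.mpr (Nat.factorial_ne_zero _)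
  have f4 : (Nat.factorial (2*j+2) : ℝ) ≠ 0 := Nat.cast_ne_zero.mpr (Nat.factorial_ne_zero _)
  have f5 : (Nat.factorial (2*j+4) : ℝ) ≠ 0 := Nat.cast_ne_zero.mpr (Nat.factorial_ne_zero _)
  have g4 : ((4:ℝ))^j ≠ 0 := by positivity
  field_simp
  ring



noncomputable def F (n : ℕ) : ℝ := ∏ i ∈ Finset.range n, (Nat.factorial i : ℝ)

lemma F_succ (n : ℕ) : F (n+1) = F n * Nat.factorial n := by
  rw [F, F, Finset.prod_range_succ]

lemma F_pos (n : ℕ) : 0 < F n := by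
  rw [F]; exact Finset.prod_pos fun i _ => by positivity

lemma prod_Uker (d : ℕ) :
    ∏ i ∈ Icc 1 d, Uker (2*(i:ℝ)+1)
      = 2^(4*d^2+2*d) * F d ^4 * F (d+1)^4 / ((2*(d:ℝ)+1) * π^(2*d) * F (2*d+1)^2) := by
  induction d with
  | zero => simp [F]
  | succ d ih =>
    rw [Finset.prod_Icc_succ_top (by omega : 1 ≤ d+1), ih]
    have harg : (2*(((d+1):ℕ):ℝ)+1) = 2*((d:ℝ)+1)+1 := by push_cast; ring
    rw [harg, Uker_succ d]
    have hF1 : F (d+1+1) = F (d+1) * Nat.factorial (d+1) := F_succ _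
    have hF2 : F (2*(d+1)+1) = F (2*d+1) * Nat.factorial (2*d+1) * Nat.factorial (2*d+2) := by
      rw [show 2*(d+1)+1 = (2*d+2)+1 by ring, F_succ, show 2*d+2 = (2*d+1)+1 by ring, F_succ]
    rw [hF1, hF2]
    have hp2 : (2:ℝ)^(4*(d+1)^2+2*(d+1)) = 2^(4*d^2+2*d) * 2^(8*d+6) := by
      rw [← pow_add]; congr 1; ring
    have hpi : (π:ℝ)^(2*(d+1)) = π^(2*d) * π^2 := by
      rw [show 2*(d+1) = 2*d+2 by ring, pow_add]
    have h4 : (4:ℝ)^(4*d+4) = 2^(8*d+8) := by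
      rw [show (4:ℝ) = 2^2 by norm_num, ← pow_mul]; congr 1; ring
    rw [hp2, hpi, h4]
    have hf1 : (Nat.factorial (d+1) : ℝ) = ((d:ℝ)+1) * Nat.factorial d := by
      rw [Nat.factorial_succ]; push_cast; ring
    have hf2 : (Nat.factorial (d+2) : ℝ) = ((d:ℝ)+2) * ((d:ℝ)+1) * Nat.factorial d := by
      rw [show d+2 = (d+1)+1 from rfl, Nat.factorial_succ, Nat.factorial_succ]; push_cast; ring
    have hg1 : (Nat.factorial (2*d+1) : ℝ) = (2*(d:ℝ)+1) * Nat.factorial (2*d) := by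
      rw [Nat.factorial_succ]; push_cast; ring
    have hg2 : (Nat.factorial (2*d+2) : ℝ) = (2*(d:ℝ)+2) * (2*(d:ℝ)+1) * Nat.factorial (2*d) := by
      rw [show 2*d+2 = (2*d+1)+1 from rfl, Nat.factorial_succ]; push_cast [hg1]; ring
    have hg4 : (Nat.factorial (2*d+4) : ℝ)
        = (2*(d:ℝ)+4) * (2*(d:ℝ)+3) * (2*(d:ℝ)+2) * (2*(d:ℝ)+1) * Nat.factorial (2*d) := by
      rw [show 2*d+4 = (2*d+3)+1 from rfl, Nat.factorial_succ,
        show 2*d+3 = (2*d+2)+1 from rfl, Nat.factorial_succ]; push_cast [hg2]; ring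
    have hFd1 : F (d+1) = F d * Nat.factorial d := F_succ d
    rw [hf1, hf2, hg1, hg2, hg4, hFd1]
    have x0 : (Nat.factorial d : ℝ) ≠ 0 := Nat.cast_ne_zero.mpr (Nat.factorial_ne_zero _)
    have y0 : (Nat.factorial (2*d) : ℝ) ≠ 0 := Nat.cast_ne_zero.mpr (Nat.factorial_ne_zero _)
    have u0 : F d ≠ 0 := (F_pos d).ne'
    have u1 : F (d+1) ≠ 0 := (F_pos _).ne'
    have v0 : F (2*d+1) ≠ 0 := (F_pos _).ne'
    have p0 : (π:ℝ) ≠ 0 := Real.pi_ne_zero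
    have c1 : (2*(d:ℝ)+1) ≠ 0 := by positivity
    have c2 : (2*(d:ℝ)+2) ≠ 0 := by positivity
    have c3 : (2*(d:ℝ)+3) ≠ 0 := by positivity
    have c4 : (2*(d:ℝ)+4) ≠ 0 := by positivity
    have cd : ((d:ℝ)+1) ≠ 0 := by positivity
    have cd2 : ((d:ℝ)+2) ≠ 0 := by positivity
    push_cast
    field_simp
    ring



noncomputable def g (n : ℕ) : ℝ :=
  F n * (n:ℝ) ^ (-(n:ℝ)^2/2 + 1/12) * (2*π) ^ (-(n:ℝ)/2) * Real.exp (3*(n:ℝ)^2/4)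

noncomputable def w (n : ℕ) : ℝ :=
  (-(n:ℝ)^2/2 + 1/12) * Real.log n + (-(n:ℝ)/2) * Real.log (2*π) + 3*(n:ℝ)^2/4

lemma g_eq (n : ℕ) (hn : 1 ≤ n) : g n = F n * Real.exp (w n) := by
  have hn0 : (0:ℝ) < n := by exact_mod_cast hn
  have h2p : (0:ℝ) < 2*π := by positivity
  rw [g, w, Real.rpow_def_of_pos hn0, Real.rpow_def_of_pos h2p, mul_assoc, mul_assoc,
    ← Real.exp_add, ← Real.exp_add]
  rw [mul_eq_mul_left_iff]
  left
  congr 1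
  ring

noncomputable def aa (d : ℕ) : ℝ :=
  (2*((d:ℝ)+1)^2 - 1/3) * Real.log (1+1/(d:ℝ))
    - ((2*(d:ℝ)+1)^2 + 5/6) * Real.log (1+1/(2*(d:ℝ)))

lemma scalar_identity (d : ℕ) (hd : 1 ≤ d) :
    Real.sqrt d * ((2:ℝ)^(4*d^2+2*d) / ((2*(d:ℝ)+1) * π^(2*d)))
      = Real.exp (4 * w d + 4 * w (d+1) - 2 * w (2*d+1)
          + (Real.log π - 5/6*Real.log 2 - 3/2 + aa d)) := by
  have hd0 : (0:ℝ) < d := by exact_mod_cast hd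
  have hL : (0:ℝ) < Real.sqrt d * ((2:ℝ)^(4*d^2+2*d) / ((2*(d:ℝ)+1) * π^(2*d))) := by
    have := Real.pi_pos
    positivity
  rw [← Real.exp_log hL]
  congr 1
  have hpi := Real.pi_pos
  rw [Real.log_mul (by positivity) (by positivity),
    Real.log_div (by positivity) (by positivity),
    Real.log_mul (by positivity) (by positivity),
    Real.log_sqrt hd0.le, Real.log_pow, Real.log_pow]
  have e1 : Real.log ((d:ℝ)+1) = Real.log d + Real.log (1+1/(d:ℝ)) := by
    rw [← Real.log_mul (by positivity) (by positivity)]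
    congr 1
    field_simp
  have e2 : Real.log (2*(d:ℝ)+1) = Real.log 2 + Real.log d + Real.log (1+1/(2*(d:ℝ))) := by
    rw [← Real.log_mul (by positivity) (by positivity),
      ← Real.log_mul (by positivity) (by positivity)]
    congr 1
    field_simp
  have e3 : Real.log (2*π) = Real.log 2 + Real.log π :=
    Real.log_mul two_ne_zero Real.pi_ne_zero
  rw [w, w, w, e3]
  push_cast
  rw [e1, e2]
  unfold aa
  ring



lemma full_identity (d : ℕ) (hd : 1 ≤ d) :
    Real.sqrt d * (2^(4*d^2+2*d) * F d ^4 * F (d+1)^4 / ((2*(d:ℝ)+1) * π^(2*d) * F (2*d+1)^2))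
      = g d ^4 * g (d+1) ^4 / g (2*d+1) ^2
          * Real.exp (Real.log π - 5/6*Real.log 2 - 3/2 + aa d) := by
  have h1 : g d ^4 = F d ^4 * Real.exp (4 * w d) := by
    rw [g_eq d hd, mul_pow, ← Real.exp_nat_mul]; norm_num
  have h2 : g (d+1) ^4 = F (d+1) ^4 * Real.exp (4 * w (d+1)) := by
    rw [g_eq (d+1) (by omega), mul_pow, ← Real.exp_nat_mul]; norm_num
  have h3 : g (2*d+1) ^2 = F (2*d+1) ^2 * Real.exp (2 * w (2*d+1)) := by
    rw [g_eq (2*d+1) (by omega), mul_pow, ← Real.exp_nat_mul]; norm_num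
  rw [h1, h2, h3]
  have hs := scalar_identity d hd
  have hF2 : F (2*d+1) ≠ 0 := (F_pos _).ne'
  have hpi : (π:ℝ) ≠ 0 := Real.pi_ne_zero
  have hc : (2*(d:ℝ)+1) ≠ 0 := by positivity
  calc Real.sqrt d * (2^(4*d^2+2*d) * F d ^4 * F (d+1)^4 / ((2*(d:ℝ)+1) * π^(2*d) * F (2*d+1)^2))
      = (Real.sqrt d * ((2:ℝ)^(4*d^2+2*d) / ((2*(d:ℝ)+1) * π^(2*d))))
          * (F d ^4 * F (d+1)^4 / F (2*d+1)^2) := by field_simp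
    _ = Real.exp (4 * w d + 4 * w (d+1) - 2 * w (2*d+1)
          + (Real.log π - 5/6*Real.log 2 - 3/2 + aa d))
          * (F d ^4 * F (d+1)^4 / F (2*d+1)^2) := by rw [hs]
    _ = _ := by
        rw [Real.exp_add, Real.exp_sub, Real.exp_add]
        field_simp

lemma key1 : Tendsto (fun x:ℝ => x^2 * (Real.log (1+1/x) - 1/x)) atTop (nhds (-(1/2))) := by
  rw [tendsto_iff_dist_tendsto_zero]
  apply squeeze_zero' (Filter.Eventually.of_forall (fun x => dist_nonneg))
    (g := fun x : ℝ => 1/(x-1))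
  · filter_upwards [Filter.eventually_ge_atTop (2:ℝ)] with x hx
    have hx0 : (0:ℝ) < x := by linarith
    have hinv : (0:ℝ) < 1/x := by positivity
    have hinv2 : 1/x ≤ 1/2 := by
      rw [div_le_div_iff₀ hx0 (by norm_num)]; linarith
    have habs : |(-(1/x))| < 1 := by
      rw [abs_neg, abs_of_pos hinv]; linarith
    have h := Real.abs_log_sub_add_sum_range_le habs 2
    rw [Finset.sum_range_succ, Finset.sum_range_succ, Finset.sum_range_zero] at h
    push_cast at h
    have hsum : ((0:ℝ) + (-(1/x)) ^ (0+1) / (0+1) + (-(1/x)) ^ (1+1) / (1+1))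
        = -(1/x) + 1/(2*x^2) := by ring
    rw [hsum] at h
    have hlog : (1:ℝ) - (-(1/x)) = 1 + 1/x := by ring
    rw [hlog] at h
    have habs2 : |(-(1/x))| = 1/x := by rw [abs_neg, abs_of_pos hinv]
    rw [habs2] at h
    rw [Real.dist_eq]
    have key : x^2 * (Real.log (1+1/x) - 1/x) - (-(1/2))
        = x^2 * ((-(1/x) + 1/(2*x^2)) + Real.log (1+1/x)) := by
      field_simp
      ring
    rw [key, abs_mul, abs_of_pos (by positivity : (0:ℝ) < x^2)]
    have hb : x^2 * |(-(1/x) + 1/(2*x^2)) + Real.log (1+1/x)| ≤ x^2 * ((1/x)^3/(1-1/x)) :=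
      mul_le_mul_of_nonneg_left h (by positivity)
    refine hb.trans (le_of_eq ?_)
    have hx1 : (0:ℝ) < x - 1 := by linarith
    have h1x : (1:ℝ) - 1/x = (x-1)/x := by field_simp
    rw [h1x, eq_div_iff hx1.ne']
    field_simp
  · have h1 : Tendsto (fun x:ℝ => x - 1) atTop atTop := tendsto_atTop_add_const_right _ _ tendsto_id
    have h2 : Tendsto (fun x:ℝ => (x-1)⁻¹) atTop (nhds 0) := h1.inv_tendsto_atTop
    simpa [one_div] using h2

lemma key2 : Tendsto (fun x:ℝ => x * Real.log (1+1/x)) atTop (nhds 1) := by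
  simpa using Real.tendsto_mul_log_one_add_div_atTop 1

lemma aa_tendsto : Tendsto (fun d : ℕ => aa d) atTop (nhds (3/2)) := by
  have n2r : Tendsto (fun d:ℕ => (d:ℝ)) atTop atTop := tendsto_natCast_atTop_atTop
  have n2r2 : Tendsto (fun d:ℕ => 2*(d:ℝ)) atTop atTop := n2r.const_mul_atTop two_pos
  have L1 : Tendsto (fun d:ℕ => (d:ℝ)^2 * (Real.log (1+1/(d:ℝ)) - 1/(d:ℝ))) atTop
      (nhds (-(1/2))) := key1.comp n2r
  have L1' : Tendsto (fun d:ℕ => (2*(d:ℝ))^2 * (Real.log (1+1/(2*(d:ℝ))) - 1/(2*(d:ℝ)))) atTop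
      (nhds (-(1/2))) := key1.comp n2r2
  have L2 : Tendsto (fun d:ℕ => (d:ℝ) * Real.log (1+1/(d:ℝ))) atTop (nhds 1) := key2.comp n2r
  have L2' : Tendsto (fun d:ℕ => (2*(d:ℝ)) * Real.log (1+1/(2*(d:ℝ)))) atTop (nhds 1) :=
    key2.comp n2r2
  have hu0 : Tendsto (fun d:ℕ => Real.log (1+1/(d:ℝ))) atTop (nhds 0) := by
    have : Tendsto (fun d:ℕ => 1+1/(d:ℝ)) atTop (nhds 1) := by
      simpa using tendsto_const_nhds.add (tendsto_one_div_atTop_nhds_zero_nat (𝕜 := ℝ))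
    have hcont := (Real.continuousAt_log (one_ne_zero)).tendsto
    simpa [Function.comp_def] using hcont.comp this
  have hv0 : Tendsto (fun d:ℕ => Real.log (1+1/(2*(d:ℝ)))) atTop (nhds 0) := by
    have h' : Tendsto (fun d:ℕ => 1+1/(2*(d:ℝ))) atTop (nhds 1) := by
      have h2 : Tendsto (fun d:ℕ => 1/(2*(d:ℝ))) atTop (nhds 0) := by
        simp only [one_div]
        exact n2r2.inv_tendsto_atTop
      simpa using tendsto_const_nhds.add h2
    have hcont := (Real.continuousAt_log (one_ne_zero)).tendsto
    simpa [Function.comp_def] using hcont.comp h'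
  have main : Tendsto (fun d:ℕ =>
      2*((d:ℝ)^2 * (Real.log (1+1/(d:ℝ)) - 1/(d:ℝ)))
        - (2*(d:ℝ))^2 * (Real.log (1+1/(2*(d:ℝ))) - 1/(2*(d:ℝ)))
        + 4*((d:ℝ) * Real.log (1+1/(d:ℝ))) + (5/3)*Real.log (1+1/(d:ℝ))
        - 2*((2*(d:ℝ)) * Real.log (1+1/(2*(d:ℝ)))) - (11/6)*Real.log (1+1/(2*(d:ℝ))))
      atTop (nhds (2*(-(1/2)) - (-(1/2)) + 4*1 + (5/3)*0 - 2*1 - (11/6)*0)) := by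
    exact ((((((L1.const_mul 2).sub L1').add (L2.const_mul 4)).add
      (hu0.const_mul (5/3))).sub (L2'.const_mul 2)).sub (hv0.const_mul (11/6)))
  have : (2*(-(1/2)) - (-(1/2)) + 4*1 + (5/3)*0 - 2*1 - (11/6)*0 : ℝ) = 3/2 := by norm_num
  rw [this] at main
  apply main.congr'
  filter_upwards [Filter.eventually_ge_atTop 1] with d hd
  have hd0 : ((d:ℝ)) ≠ 0 := by
    have : (1:ℝ) ≤ (d:ℝ) := by exact_mod_cast hd
    linarith
  unfold aa
  field_simp
  ring



noncomputable def T (m : ℕ) : ℝ := ∑ k ∈ Finset.range (m+1), (k:ℝ) * Real.log k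

lemma T_succ (m : ℕ) : T (m+1) = T m + ((m:ℝ)+1) * Real.log ((m:ℝ)+1) := by
  rw [T, T, Finset.sum_range_succ]
  push_cast
  ring

lemma logF_eq (m : ℕ) :
    Real.log (F (m+1)) = ((m:ℝ)+1) * Real.log (Nat.factorial m) - T m := by
  induction m with
  | zero => simp [F, T]
  | succ m ih =>
    have hfs : Real.log (Nat.factorial (m+1))
        = Real.log ((m:ℝ)+1) + Real.log (Nat.factorial m) := by
      rw [Nat.factorial_succ, Nat.cast_mul, Real.log_mul (by positivity)
        (Nat.cast_ne_zero.mpr (Nat.factorial_ne_zero m))]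
      push_cast
      ring
    rw [F_succ, Real.log_mul (F_pos _).ne' (Nat.cast_ne_zero.mpr (Nat.factorial_ne_zero _)),
      ih, T_succ, hfs]
    push_cast
    ring

lemma step_ineq (y : ℝ) (hy : 2 ≤ y) :
    (2*y+1)/4 - 3/(2*y*(y+1)) ≤
      (y*(y+1)/2 + 1/12) * ((1/y - 1/(2*y^2) + 1/(3*y^3) - 1/(4*y^4)) - 1/(y^4*(y-1))) := by
  have hy0 : (0:ℝ) < y := by linarith
  have hy1 : (0:ℝ) < y - 1 := by linarith
  have hyp : (0:ℝ) < y + 1 := by linarith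
  rw [← sub_nonneg]
  have key : (y*(y+1)/2 + 1/12) * ((1/y - 1/(2*y^2) + 1/(3*y^3) - 1/(4*y^4)) - 1/(y^4*(y-1)))
      - ((2*y+1)/4 - 3/(2*y*(y+1)))
      = (216*y^4 - 302*y^3 - 147*y^2 - 70*y - 9) / (144*y^4*(y-1)*(y+1)) := by
    field_simp
    ring
  rw [key]
  apply div_nonneg
  · nlinarith [sq_nonneg y, sq_nonneg (y-2), mul_nonneg (sub_nonneg.2 hy) (pow_pos hy0 3).le,
      pow_pos hy0 3, pow_pos hy0 2, mul_pos hy0 hy0]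
  · positivity

lemma log_lower (y : ℝ) (hy : 2 ≤ y) :
    (1/y - 1/(2*y^2) + 1/(3*y^3) - 1/(4*y^4)) - 1/(y^4*(y-1)) ≤ Real.log (1+1/y) := by
  have hy0 : (0:ℝ) < y := by linarith
  have hy1 : (0:ℝ) < y - 1 := by linarith
  have hinv : (0:ℝ) < 1/y := by positivity
  have hinv2 : 1/y ≤ 1/2 := by
    rw [div_le_div_iff₀ hy0 (by norm_num)]; linarith
  have habs : |(-(1/y))| < 1 := by rw [abs_neg, abs_of_pos hinv]; linarith
  have h := Real.abs_log_sub_add_sum_range_le habs 4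
  rw [Finset.sum_range_succ, Finset.sum_range_succ, Finset.sum_range_succ,
    Finset.sum_range_succ, Finset.sum_range_zero] at h
  push_cast at h
  have hlog : (1:ℝ) - (-(1/y)) = 1 + 1/y := by ring
  rw [hlog, abs_neg, abs_of_pos hinv] at h
  have h' := (abs_le.mp h).1
  have hsum : (0 + (-(1/y)) ^ (0+1) / (0+1) + (-(1/y)) ^ (1+1) / (1+1)
      + (-(1/y)) ^ (2+1) / (2+1) + (-(1/y)) ^ (3+1) / (3+1))
      = -(1/y - 1/(2*y^2) + 1/(3*y^3) - 1/(4*y^4)) := by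
    norm_num
    field_simp
    ring
  rw [hsum] at h'
  have herr : (1/y)^(4+1) / (1 - 1/y) = 1/(y^4*(y-1)) := by
    rw [show (1:ℝ) - 1/y = (y-1)/y by field_simp]
    rw [div_div_eq_mul_div]
    rw [div_eq_div_iff (by positivity : (y:ℝ) - 1 ≠ 0) (by positivity : (y:ℝ)^4*(y-1) ≠ 0)]
    field_simp
    rw [← mul_pow, mul_one_div_cancel hy0.ne', one_pow]
  rw [herr] at h'
  linarith

lemma T_bound : ∀ m : ℕ, 1 ≤ m →
    T m ≤ ((m:ℝ)*((m:ℝ)+1)/2 + 1/12) * Real.log m - ((m:ℝ)^2-1)/4 + 3/2 - 3/(2*(m:ℝ)) := by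
  intro m hm
  induction m with
  | zero => omega
  | succ m ih =>
    rcases Nat.lt_or_ge m 1 with h1 | hm1
    · have : m = 0 := by omega
      subst this
      have hT1 : T 1 = 0 := by
        rw [T]
        simp [Finset.sum_range_succ]
      rw [hT1]
      norm_num
    · have ihm := ih hm1
      have hmr : (1:ℝ) ≤ (m:ℝ) := by exact_mod_cast hm1
      have hm0 : (0:ℝ) < m := by linarith
      have hstep : (2*(m:ℝ)+1)/4 - 3/(2*(m:ℝ)*((m:ℝ)+1))
          ≤ ((m:ℝ)*((m:ℝ)+1)/2 + 1/12) * Real.log (1+1/(m:ℝ)) := by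
        rcases le_or_gt 2 (m:ℝ) with h2 | h2
        · exact le_trans (step_ineq (m:ℝ) h2)
            (mul_le_mul_of_nonneg_left (log_lower (m:ℝ) h2) (by positivity))
        · have hmeq : m = 1 := by
            have : m < 2 := by exact_mod_cast h2
            omega
          subst hmeq
          have hl2 := Real.log_pos (by norm_num : (1:ℝ) < 2)
          norm_num
          nlinarith [hl2]
      have hlogsum : Real.log ((m:ℝ)+1) = Real.log m + Real.log (1+1/(m:ℝ)) := by
        rw [← Real.log_mul (by positivity) (by positivity)]
        congr 1
        field_simp
      rw [T_succ]
      push_cast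
      rw [hlogsum]
      have hid : (((m:ℝ)+1)*(((m:ℝ)+1)+1)/2 + 1/12) * (Real.log m + Real.log (1+1/(m:ℝ)))
            - (((m:ℝ)+1)^2-1)/4 + 3/2 - 3/(2*((m:ℝ)+1))
          - ( ((m:ℝ)*((m:ℝ)+1)/2 + 1/12) * Real.log m - ((m:ℝ)^2-1)/4 + 3/2 - 3/(2*(m:ℝ)) )
          - ((m:ℝ)+1)*(Real.log m + Real.log (1+1/(m:ℝ)))
          = ((m:ℝ)*((m:ℝ)+1)/2 + 1/12) * Real.log (1+1/(m:ℝ))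
            - ((2*(m:ℝ)+1)/4 - 3/(2*(m:ℝ)*((m:ℝ)+1))) := by
        field_simp
        ring
      linarith [ihm, hstep, hid]



lemma stirling_lower (m : ℕ) (hm : 1 ≤ m) :
    (1/2)*Real.log π + (1/2)*(Real.log 2 + Real.log m) + (m:ℝ)*(Real.log m - 1)
      ≤ Real.log (Nat.factorial m) := by
  have hmr : (1:ℝ) ≤ (m:ℝ) := by exact_mod_cast hm
  have hm0 : (0:ℝ) < m := by linarith
  obtain ⟨k, rfl⟩ : ∃ k, m = k + 1 := ⟨m - 1, by omega⟩
  have hsp : Real.sqrt π ≤ Stirling.stirlingSeq (k+1) :=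
    Stirling.stirlingSeq'_antitone.le_of_tendsto
      (Stirling.tendsto_stirlingSeq_sqrt_pi.comp (tendsto_add_atTop_nat 1)) k
  rw [Stirling.stirlingSeq] at hsp
  have hpos : (0:ℝ) < Real.sqrt (2*(k+1:ℕ) : ℝ) * (((k+1:ℕ):ℝ)/Real.exp 1)^(k+1) := by
    positivity
  rw [le_div_iff₀ hpos] at hsp
  have hlog := Real.log_le_log (by positivity) hsp
  rw [Real.log_mul (by positivity) (by positivity), Real.log_mul (by positivity) (by positivity),
    Real.log_sqrt Real.pi_pos.le, Real.log_sqrt (by positivity),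
    Real.log_mul (by norm_num) (by positivity), Real.log_pow,
    Real.log_div (by positivity) (Real.exp_ne_zero 1), Real.log_exp] at hlog
  calc (1/2)*Real.log π + (1/2)*(Real.log 2 + Real.log (k+1:ℕ)) + ((k+1:ℕ):ℝ)*(Real.log (k+1:ℕ) - 1)
      = Real.log π / 2 + ((Real.log 2 + Real.log (k+1:ℕ)) / 2
        + (k+1:ℕ) * (Real.log (k+1:ℕ) - 1)) := by push_cast; ring
    _ ≤ Real.log (Nat.factorial (k+1)) := hlog

lemma g_lower (n : ℕ) (hn : 2 ≤ n) : Real.exp (-(5/2) : ℝ) ≤ g n := by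
  obtain ⟨m, rfl⟩ : ∃ m, n = m + 1 := ⟨n - 1, by omega⟩
  have hm1 : 1 ≤ m := by omega
  have hp1 : (1:ℝ) ≤ (m:ℝ) := by exact_mod_cast hm1
  have hp0 : (0:ℝ) < m := by linarith
  set p : ℝ := (m:ℝ) with hp
  have hgpos : 0 < g (m+1) := by
    rw [g_eq (m+1) (by omega)]
    exact mul_pos (F_pos _) (Real.exp_pos _)
  rw [← Real.exp_log hgpos]
  apply Real.exp_le_exp.mpr
  rw [g_eq (m+1) (by omega), Real.log_mul (F_pos _).ne' (Real.exp_ne_zero _), Real.log_exp]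
  -- expand w (m+1)
  have e3 : Real.log (2*π) = Real.log 2 + Real.log π :=
    Real.log_mul two_ne_zero Real.pi_ne_zero
  have hw : w (m+1) = (-(p+1)^2/2 + 1/12) * Real.log (p+1)
      + (-(p+1)/2) * (Real.log 2 + Real.log π) + 3*(p+1)^2/4 := by
    rw [w, e3]
    push_cast
    ring
  have h3 := logF_eq m
  -- h1 : Stirling lower bound times (p+1)
  have h1 : (p+1) * ((1/2)*Real.log π + (1/2)*(Real.log 2 + Real.log p) + p*(Real.log p - 1))
      ≤ (p+1) * Real.log (Nat.factorial m) := by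
    apply mul_le_mul_of_nonneg_left (stirling_lower m hm1) (by linarith)
  have h2 : T m ≤ (p*(p+1)/2 + 1/12) * Real.log p - (p^2-1)/4 + 3/2 := by
    have := T_bound m hm1
    have h3p : 0 < 3/(2*p) := by positivity
    linarith
  -- log(p+1) ≤ log p + 1/p
  have h4 : Real.log (p+1) ≤ Real.log p + 1/p := by
    have hls : Real.log (p+1) = Real.log p + Real.log (1+1/p) := by
      rw [← Real.log_mul (by positivity) (by positivity)]
      congr 1
      field_simp
    have := Real.log_le_sub_one_of_pos (show (0:ℝ) < 1+1/p by positivity)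
    rw [hls]
    linarith
  have hcoef : (-(p+1)^2/2 + 1/12) ≤ 0 := by nlinarith
  have h5 : (-(p+1)^2/2 + 1/12) * (Real.log p + 1/p) ≤ (-(p+1)^2/2 + 1/12) * Real.log (p+1) :=
    mul_le_mul_of_nonpos_left h4 hcoef
  have hCid : -(p^2+p) + (p^2-1)/4 - 3/2 + 3*(p+1)^2/4 + (-(p+1)^2/2 + 1/12)*(1/p) + 5/2
      = (6*p-5)/(12*p) := by
    field_simp
    ring
  have hC : 0 ≤ (6*p-5)/(12*p) := by
    apply div_nonneg (by linarith) (by positivity)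
  rw [hw, h3]
  linarith [h1, h2, h5, hCid, hC]



lemma g_eq_seq : (fun n : ℕ =>
      (∏ i ∈ Finset.range n, (Nat.factorial i : ℝ)) *
        (n : ℝ) ^ (-(n : ℝ) ^ 2 / 2 + 1 / 12) * (2 * Real.pi) ^ (-(n : ℝ) / 2) *
        Real.exp (3 * (n : ℝ) ^ 2 / 4)) = g := by
  funext n
  rw [g, F]

end DimerAux

open Dimer Filter Finset Real in
/-- Proposition 7.1, eq. (7.2): `∏_{i=1}^d U(2i+1) ∼ C′/√d` as
`d → ∞`, with `C′ = C/2` and `C = 2^{1/6} e^{1/2} π / A⁶`. -/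
theorem statement_15 (A : ℝ) (hA : IsGlaisher A) :
    Filter.Tendsto
      (fun d : ℕ => Real.sqrt d * ∏ i ∈ Finset.Icc 1 d, Uker (2 * (i : ℝ) + 1))
      Filter.atTop
      (nhds ((2 : ℝ) ^ ((1 : ℝ) / 6) * Real.exp (1 / 2) * Real.pi / A ^ 6 / 2)) := by
  have hg : Tendsto DimerAux.g atTop (nhds (Real.exp (1/12) / A)) := by
    rw [← DimerAux.g_eq_seq]; exact hA
  -- A ≠ 0
  have hA0 : A ≠ 0 := by
    intro h0
    rw [h0, div_zero] at hg
    have hev : ∀ᶠ n in atTop, DimerAux.g n < Real.exp (-(5/2) : ℝ) :=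
      hg.eventually_lt_const (Real.exp_pos _)
    obtain ⟨n, hn2, hlt⟩ := ((eventually_ge_atTop 2).and hev).exists
    exact absurd (DimerAux.g_lower n hn2) (not_le.mpr hlt)
  set L : ℝ := Real.exp (1/12) / A with hLdef
  have hL0 : L ≠ 0 := div_ne_zero (Real.exp_ne_zero _) hA0
  have h21 : Tendsto (fun d:ℕ => 2*d+1) atTop atTop :=
    (strictMono_nat_of_lt_succ (fun n => by omega)).tendsto_atTop
  have hg1 : Tendsto (fun d:ℕ => DimerAux.g (d+1)) atTop (nhds L) := hg.comp (tendsto_add_atTop_nat 1)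
  have hg2 : Tendsto (fun d:ℕ => DimerAux.g (2*d+1)) atTop (nhds L) := hg.comp h21
  have hG : Tendsto (fun d:ℕ => DimerAux.g d ^4 * DimerAux.g (d+1) ^4 / DimerAux.g (2*d+1) ^2) atTop
      (nhds (L^4 * L^4 / L^2)) :=
    ((hg.pow 4).mul (hg1.pow 4)).div (hg2.pow 2) (pow_ne_zero 2 hL0)
  have hE : Tendsto (fun d:ℕ => Real.exp (Real.log π - 5/6*Real.log 2 - 3/2 + DimerAux.aa d)) atTop
      (nhds (Real.exp (Real.log π - 5/6*Real.log 2 - 3/2 + 3/2))) :=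
    (Real.continuous_exp.tendsto _).comp (tendsto_const_nhds.add DimerAux.aa_tendsto)
  have hfin := hG.mul hE
  have target_eq : (L^4 * L^4 / L^2) * Real.exp (Real.log π - 5/6*Real.log 2 - 3/2 + 3/2)
      = (2 : ℝ) ^ ((1 : ℝ) / 6) * Real.exp (1 / 2) * Real.pi / A ^ 6 / 2 := by
    have hL6 : L^4 * L^4 / L^2 = L^6 := by
      rw [div_eq_iff (pow_ne_zero 2 hL0)]; ring
    have hexp : Real.exp (Real.log π - 5/6*Real.log 2 - 3/2 + 3/2)
        = π * (2:ℝ) ^ (-(5/6) : ℝ) := by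
      rw [show (Real.log π - 5/6*Real.log 2 - 3/2 + 3/2) = Real.log π + Real.log 2 * (-(5/6))
        by ring, Real.exp_add, Real.exp_log Real.pi_pos, ← Real.rpow_def_of_pos two_pos]
    rw [hL6, hexp, hLdef, div_pow, show Real.exp (1/12) ^ 6 = Real.exp (1/2) by
      rw [← Real.exp_nat_mul]; norm_num]
    rw [show ((1:ℝ)/6) = -(5/6) + 1 by norm_num, Real.rpow_add two_pos, Real.rpow_one]
    field_simp
  rw [target_eq] at hfin
  apply hfin.congr'
  filter_upwards [eventually_ge_atTop 1] with d hd
  rw [DimerAux.prod_Uker d]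
  have := DimerAux.full_identity d hd
  rw [show (2*(d:ℝ)+1) * π^(2*d) * DimerAux.F (2*d+1)^2 = ((2*(d:ℝ)+1) * π^(2*d) * DimerAux.F (2*d+1)^2) from rfl]
  linarith [this]
end

section
/- As d → ∞, ∏_{i=2}^d L(2i) ∼ C_e·√d, i.e., lim_{d→∞} (∏_{i=2}^d L(2i))/√d = C_e, where C_e = 4/(πC) and C = 2^{1/6}·e^{1/2}·π/A⁶. -/
open Filter Finset Real

namespace Stmt16
open Dimer Filter Finset Real Stirling

noncomputable def F (n : ℕ) : ℝ := ∏ i ∈ Finset.range n, (Nat.factorial i : ℝ)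

noncomputable def W (n : ℕ) : ℝ :=
  (n : ℝ) ^ (-(n : ℝ) ^ 2 / 2 + 1 / 12) * (2 * π) ^ (-(n : ℝ) / 2) * Real.exp (3 * (n : ℝ) ^ 2 / 4)

noncomputable def aseq (n : ℕ) : ℝ := F n * W n

lemma F_pos (n : ℕ) : 0 < F n := Finset.prod_pos fun i _ => by positivity

lemma F_succ (n : ℕ) : F (n + 1) = F n * (Nat.factorial n : ℝ) := Finset.prod_range_succ _ _

lemma W_pos {n : ℕ} (hn : 1 ≤ n) : 0 < W n := by
  have h1 : (0:ℝ) < n := by exact_mod_cast hn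
  have h2 : (0:ℝ) < 2 * π := by positivity
  exact mul_pos (mul_pos (Real.rpow_pos_of_pos h1 _) (Real.rpow_pos_of_pos h2 _)) (Real.exp_pos _)

lemma aseq_pos {n : ℕ} (hn : 1 ≤ n) : 0 < aseq n := mul_pos (F_pos n) (W_pos hn)

lemma log_W {n : ℕ} (hn : 1 ≤ n) :
    Real.log (W n) = (-(n : ℝ) ^ 2 / 2 + 1 / 12) * Real.log n
      + (-(n : ℝ) / 2) * (Real.log 2 + Real.log π) + 3 * (n : ℝ) ^ 2 / 4 := by
  have h1 : (0:ℝ) < n := by exact_mod_cast hn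
  have h2 : (0:ℝ) < 2 * π := by positivity
  rw [W, Real.log_mul (by positivity) (Real.exp_ne_zero _),
    Real.log_mul (Real.rpow_pos_of_pos h1 _).ne' (Real.rpow_pos_of_pos h2 _).ne',
    Real.log_rpow h1, Real.log_rpow h2, Real.log_exp, Real.log_mul two_ne_zero pi_ne_zero]

lemma Gamma_nat_add_half (n : ℕ) :
    Real.Gamma ((n : ℝ) + 1 / 2) = Real.sqrt π * (Nat.factorial (2 * n)) / (4 ^ n * Nat.factorial n) := by
  induction n with
  | zero => norm_num [Real.Gamma_one_half_eq]
  | succ n ih =>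
    have h : ((n : ℝ) + 1) + 1 / 2 = ((n : ℝ) + 1 / 2) + 1 := by ring
    rw [Nat.cast_succ, h, Real.Gamma_add_one (by positivity), ih]
    have h2 : 2 * (n + 1) = (2 * n + 1) + 1 := by ring
    rw [h2]
    simp [Nat.factorial_succ]
    push_cast
    field_simp
    ring

lemma Lker_val (m : ℕ) :
    Lker (2 * ((m : ℝ) + 1)) =
      π ^ 2 * (2 * (m : ℝ) + 1) ^ 2 * (Nat.factorial (2 * m) : ℝ) ^ 4 /
        (4 * (4 : ℝ) ^ (4 * m) * (Nat.factorial m : ℝ) ^ 8) := by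
  have h1 : (2 * ((m : ℝ) + 1) - 1) / 2 = (m : ℝ) + 1 / 2 := by ring
  have h2 : (2 * ((m : ℝ) + 1) + 1) / 2 = ((m : ℝ) + 1) + 1 / 2 := by push_cast; ring
  have h3 : (2 * ((m : ℝ) + 1)) / 2 = ((m : ℝ) + 1) := by ring
  have h2' : ((m : ℝ) + 1) + 1 / 2 = ((m + 1 : ℕ) : ℝ) + 1 / 2 := by push_cast; ring
  rw [Lker, h1, h2, h3, h2', Gamma_nat_add_half, Gamma_nat_add_half, Real.Gamma_nat_eq_factorial]
  have e1 : 2 * (m + 1) = (2 * m + 1) + 1 := by ring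
  rw [e1, Nat.factorial_succ, Nat.factorial_succ m]
  have hsq : Real.sqrt π ^ 2 = π := Real.sq_sqrt pi_pos.le
  have hf : (Nat.factorial m : ℝ) ≠ 0 := by positivity
  have hf2 : (Nat.factorial (2*m) : ℝ) ≠ 0 := by positivity
  have h4 : ((4:ℝ) ^ m) ≠ 0 := by positivity
  have hsq4 : Real.sqrt π ^ 4 = π ^ 2 := by
    rw [show (4:ℕ) = 2*2 from rfl, pow_mul, hsq]
  rw [Nat.factorial_succ (2*m)]
  push_cast
  rw [pow_succ]
  field_simp
  ring_nf
  rw [hsq4]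
  ring

lemma prod_Lker : ∀ d : ℕ, 1 ≤ d →
    ∏ i ∈ Finset.Icc 2 d, Lker (2 * (i : ℝ)) =
      4 * π ^ (2*d) * 4 ^ d * F (2*d) ^ 2 / (π ^ 2 * 4 ^ (2*d^2) * F d ^ 8) := by
  intro d hd
  induction d with
  | zero => omega
  | succ d ih =>
    rcases Nat.eq_or_lt_of_le hd with h1 | h1
    · have : d = 0 := by omega
      subst this
      rw [show Finset.Icc 2 1 = ∅ from rfl]
      have : F 2 = 1 := by simp [F, Finset.prod_range_succ]
      rw [Finset.prod_empty, this, show F 1 = 1 by simp [F]]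
      have : π ≠ 0 := pi_ne_zero
      field_simp
      ring
    · have hd1 : 1 ≤ d := by omega
      rw [Finset.prod_Icc_succ_top (by omega : 2 ≤ d + 1), ih hd1]
      have hc : ((d + 1 : ℕ) : ℝ) = (d : ℝ) + 1 := by push_cast; ring
      rw [hc, Lker_val d]
      have e2 : 2 * (d + 1) = (2*d + 1) + 1 := by ring
      rw [e2, F_succ, F_succ, F_succ d]
      rw [show (2*d+1) = 2*d + 1 from rfl, Nat.factorial_succ (2*d)]
      have hπ : π ≠ 0 := pi_ne_zero
      have hFd : F d ≠ 0 := (F_pos d).ne'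
      have hF2d : F (2*d) ≠ 0 := (F_pos (2*d)).ne'
      have hfd : (Nat.factorial d : ℝ) ≠ 0 := by positivity
      have hf2d : (Nat.factorial (2*d) : ℝ) ≠ 0 := by positivity
      push_cast
      field_simp
      ring

lemma elem (d : ℕ) (hd : 1 ≤ d) :
    W (2*d) ^ 2 * ((2:ℝ) ^ (-(1:ℝ)/6) * 4 / π ^ 2) =
      (4 * π ^ (2*d) * 4 ^ d / (π ^ 2 * 4 ^ (2*d^2) * Real.sqrt d)) * W d ^ 8 := by
  have hx : (0:ℝ) < (d:ℝ) := by exact_mod_cast hd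
  have hW1 : 0 < W (2*d) := W_pos (by omega)
  have hW2 : 0 < W d := W_pos hd
  have hL : 0 < W (2*d) ^ 2 * ((2:ℝ) ^ (-(1:ℝ)/6) * 4 / π ^ 2) := by
    have := Real.rpow_pos_of_pos (by norm_num : (0:ℝ) < 2) (-(1:ℝ)/6)
    positivity
  have hR : 0 < (4 * π ^ (2*d) * 4 ^ d / (π ^ 2 * 4 ^ (2*d^2) * Real.sqrt d)) * W d ^ 8 := by
    have h4 : (0:ℝ) < 4 ^ d := by positivity
    have : (0:ℝ) < Real.sqrt d := Real.sqrt_pos.mpr hx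
    positivity
  rw [← Real.exp_log hL, ← Real.exp_log hR]
  congr 1
  rw [show (4:ℝ) = 2^2 by norm_num]
  simp (disch := positivity) only [Real.log_mul, Real.log_div, Real.log_pow, Real.log_rpow,
    Real.log_sqrt]
  rw [log_W (show 1 ≤ 2*d by omega), log_W hd]
  push_cast
  rw [Real.log_mul two_ne_zero hx.ne']
  ring

lemma key_eq (d : ℕ) (hd : 1 ≤ d) :
    (∏ i ∈ Finset.Icc 2 d, Lker (2 * (i : ℝ))) / Real.sqrt d =
      (F (2*d) * W (2*d)) ^ 2 / (F d * W d) ^ 8 * ((2:ℝ) ^ (-(1:ℝ)/6) * 4 / π ^ 2) := by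
  have hx : (0:ℝ) < (d:ℝ) := by exact_mod_cast hd
  have hs : (0:ℝ) < Real.sqrt d := Real.sqrt_pos.mpr hx
  have hW1 : 0 < W (2*d) := W_pos (by omega)
  have hW2 : 0 < W d := W_pos hd
  have hF1 := F_pos (2*d)
  have hF2 := F_pos d
  have h2 : (0:ℝ) < (2:ℝ) ^ (-(1:ℝ)/6) := Real.rpow_pos_of_pos (by norm_num) _
  have hπ := Real.pi_pos
  rw [prod_Lker d hd, mul_pow, mul_pow]
  have helem := elem d hd
  field_simp at helem ⊢
  linear_combination (-1 : ℝ) * helem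

lemma poly_key (K : ℝ) (hK : 1 ≤ K) :
    1/(12*K) - 2/K^2 - (1/(12*(K+1)) - 2/(K+1)^2) ≤ (1:ℝ)/3 * (1/(2*K+1)^2) := by
  have h0 : (0:ℝ) < K := by linarith
  have h1 : (0:ℝ) < K + 1 := by linarith
  have h2 : (0:ℝ) < 2*K+1 := by linarith
  have e : (1:ℝ)/3 * (1/(2*K+1)^2) - (1/(12*K) - 2/K^2 - (1/(12*(K+1)) - 2/(K+1)^2)) =
      (24*(2*K+1)^3 - K^2 - K) / (12*K^2*(K+1)^2*(2*K+1)^2) := by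
    field_simp
    ring
  have hnum : (0:ℝ) ≤ 24*(2*K+1)^3 - K^2 - K := by nlinarith
  have hden : (0:ℝ) < 12*K^2*(K+1)^2*(2*K+1)^2 := by positivity
  have := div_nonneg hnum hden.le
  linarith [e ▸ this]

/-- lower bound on a Stirling log-difference by its first series term -/
lemma diff_ge (m : ℕ) :
    (1:ℝ)/3 * ((1 / (2 * ((m:ℝ) + 1) + 1)) ^ 2) ≤
      Real.log (stirlingSeq (m + 1)) - Real.log (stirlingSeq (m + 2)) := by
  have h := Stirling.log_stirlingSeq_diff_hasSum m
  have h0 := le_hasSum h 0 (fun j _ => by positivity)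
  refine le_trans (le_of_eq ?_) h0
  push_cast
  norm_num

/-- upper bound: geometric series comparison with ratio ≤ 1/3 -/
lemma diff_le (m : ℕ) :
    Real.log (stirlingSeq (m + 1)) - Real.log (stirlingSeq (m + 2)) ≤
      1 / (12 * ((m:ℝ) + 1) * ((m:ℝ) + 2)) := by
  have hm : (0:ℝ) ≤ (m:ℝ) := Nat.cast_nonneg m
  set y : ℝ := 1 / (2 * ((m+1:ℕ):ℝ) + 1) with hy
  have hy0 : (0:ℝ) < 2 * ((m+1:ℕ):ℝ) + 1 := by push_cast; linarith
  have hx0 : 0 ≤ y^2 := by positivity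
  have hx1 : y^2 < 1 := by
    rw [hy, div_pow, one_pow, div_lt_one (by positivity)]
    push_cast
    nlinarith
  have g : HasSum (fun k : ℕ => (1:ℝ)/3 * (y^2) ^ (k+1)) ((1:ℝ)/3 * (y^2 / (1 - y^2))) := by
    have := (hasSum_geometric_of_lt_one hx0 hx1).mul_left (y^2)
    simp_rw [← _root_.pow_succ'] at this
    exact this.mul_left _
  have hab : ∀ k : ℕ, (1 : ℝ) / (2 * ((k+1:ℕ):ℝ) + 1) * (y^2) ^ (k + 1) ≤
      (1:ℝ)/3 * (y^2) ^ (k+1) := by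
    intro k
    apply mul_le_mul_of_nonneg_right _ (by positivity)
    rw [div_le_div_iff₀ (by push_cast; positivity) (by norm_num)]
    push_cast
    nlinarith [Nat.cast_nonneg (α := ℝ) k]
  have hle := hasSum_le hab (Stirling.log_stirlingSeq_diff_hasSum m) g
  refine hle.trans (le_of_eq ?_)
  rw [hy]
  have h1 : ((m+1:ℕ):ℝ) = (m:ℝ) + 1 := by push_cast; ring
  rw [h1]
  have h2 : (0:ℝ) < 2 * ((m:ℝ)+1) + 1 := by linarith
  have h3 : (24 + (m:ℝ)*36 + (m:ℝ)^2*12) ≠ 0 := by positivity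
  field_simp
  ring_nf
  field_simp [h3]
  ring

lemma stirling_lb (m : ℕ) :
    Real.log (Real.sqrt π) + (1/(12*((m:ℝ)+1)) - 2/((m:ℝ)+1)^2) ≤
      Real.log (stirlingSeq (m + 1)) := by
  set φ : ℕ → ℝ := fun k => Real.log (stirlingSeq (k+1)) - (1/(12*((k:ℝ)+1)) - 2/((k:ℝ)+1)^2)
    with hφ
  have hanti : Antitone φ := by
    apply antitone_nat_of_succ_le
    intro k
    have hd := diff_ge k
    have hkey := poly_key ((k:ℝ)+1) (by have := Nat.cast_nonneg (α := ℝ) k; linarith)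
    simp only [hφ]
    push_cast
    have e1 : (k:ℝ) + 1 + 1 = (k:ℝ) + 2 := by ring
    rw [e1] at hkey ⊢
    rw [div_pow, one_pow] at hd
    rw [show k+1+1 = k+2 from rfl]
    linarith [hd, hkey]
  have t0 : Tendsto (fun k : ℕ => ((k:ℝ)+1)) atTop atTop :=
    tendsto_atTop_add_const_right _ 1 tendsto_natCast_atTop_atTop
  have hlim : Tendsto φ atTop (nhds (Real.log (Real.sqrt π))) := by
    have h1 : Tendsto (fun k : ℕ => stirlingSeq (k+1)) atTop (nhds (Real.sqrt π)) :=
      Stirling.tendsto_stirlingSeq_sqrt_pi.comp (tendsto_add_atTop_nat 1)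
    have h2 : Tendsto (fun k : ℕ => Real.log (stirlingSeq (k+1))) atTop
        (nhds (Real.log (Real.sqrt π))) :=
      ((Real.continuousAt_log (by positivity)).tendsto.comp h1)
    have a1 : Tendsto (fun k : ℕ => 1/(12*((k:ℝ)+1))) atTop (nhds 0) := by
      simpa only [one_div, Pi.inv_def] using (t0.const_mul_atTop (by norm_num : (0:ℝ) < 12)).inv_tendsto_atTop
    have tsq : Tendsto (fun k : ℕ => ((k:ℝ)+1)^2) atTop atTop := by
      have := t0.atTop_mul_atTop₀ t0
      simpa [pow_two] using this
    have a2 : Tendsto (fun k : ℕ => 2/((k:ℝ)+1)^2) atTop (nhds 0) :=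
      tendsto_const_nhds.div_atTop tsq
    have h3 : Tendsto (fun k : ℕ => 1/(12*((k:ℝ)+1)) - 2/((k:ℝ)+1)^2) atTop (nhds 0) := by
      simpa using a1.sub a2
    have := h2.sub h3
    rw [sub_zero] at this
    exact this
  have hm := hanti.le_of_tendsto hlim m
  simp only [hφ] at hm
  linarith

lemma r_eq (n : ℕ) (hn : 1 ≤ n) :
    Real.log (stirlingSeq n) - Real.log (stirlingSeq (n+1)) =
      ((n:ℝ) + 1/2) * Real.log (1 + 1/(n:ℝ)) - 1 := by
  have hn' : (0:ℝ) < n := by exact_mod_cast hn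
  have hn1 : (0:ℝ) < (n:ℝ) + 1 := by linarith
  have hfac : (0:ℝ) < (Nat.factorial n : ℝ) := by positivity
  rw [log_stirlingSeq_formula, log_stirlingSeq_formula]
  have h1 : ((Nat.factorial (n+1) : ℕ) : ℝ) = ((n:ℝ)+1) * (Nat.factorial n : ℝ) := by
    rw [Nat.factorial_succ]; push_cast; ring
  rw [h1, Real.log_mul hn1.ne' hfac.ne']
  have h2 : Real.log (2 * ((n+1:ℕ):ℝ)) = Real.log 2 + Real.log ((n:ℝ)+1) := by
    push_cast; rw [Real.log_mul two_ne_zero hn1.ne']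
  have h3 : Real.log (2 * (n:ℝ)) = Real.log 2 + Real.log n := Real.log_mul two_ne_zero hn'.ne'
  have h4 : Real.log ((n:ℝ) / Real.exp 1) = Real.log n - 1 := by
    rw [Real.log_div hn'.ne' (Real.exp_ne_zero 1), Real.log_exp]
  have h5 : Real.log (((n+1:ℕ):ℝ) / Real.exp 1) = Real.log ((n:ℝ)+1) - 1 := by
    push_cast; rw [Real.log_div hn1.ne' (Real.exp_ne_zero 1), Real.log_exp]
  have h6 : Real.log (1 + 1/(n:ℝ)) = Real.log ((n:ℝ)+1) - Real.log n := by
    rw [show (1:ℝ) + 1/(n:ℝ) = ((n:ℝ)+1)/n by field_simp, Real.log_div hn1.ne' hn'.ne']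
  rw [h2, h3, h4, h5, h6]
  push_cast
  ring

lemma delta_eq (n : ℕ) (hn : 1 ≤ n) :
    Real.log (aseq (n+1)) - Real.log (aseq n) =
      (Real.log (stirlingSeq n) - Real.log (Real.sqrt π))
      - ((n:ℝ)/2 + 3/4) * (Real.log (stirlingSeq n) - Real.log (stirlingSeq (n+1)))
      - Real.log (1 + 1/(n:ℝ)) / 24 := by
  have hn' : (0:ℝ) < n := by exact_mod_cast hn
  have hn1 : (0:ℝ) < (n:ℝ) + 1 := by linarith
  have hfac : (0:ℝ) < (Nat.factorial n : ℝ) := by positivity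
  have hA1 : Real.log (aseq (n+1)) = Real.log (F (n+1)) + Real.log (W (n+1)) :=
    Real.log_mul (F_pos _).ne' (W_pos (by omega)).ne'
  have hA0 : Real.log (aseq n) = Real.log (F n) + Real.log (W n) :=
    Real.log_mul (F_pos _).ne' (W_pos hn).ne'
  have hFs : Real.log (F (n+1)) = Real.log (F n) + Real.log (Nat.factorial n : ℝ) := by
    rw [F_succ, Real.log_mul (F_pos n).ne' hfac.ne']
  have hW1 := log_W (show 1 ≤ n+1 by omega)
  have hW0 := log_W hn
  have hsf := log_stirlingSeq_formula n
  have hr := r_eq n hn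
  have hsqrtpi : Real.log (Real.sqrt π) = Real.log π / 2 := Real.log_sqrt pi_pos.le
  have h3 : Real.log (2 * (n:ℝ)) = Real.log 2 + Real.log n := Real.log_mul two_ne_zero hn'.ne'
  have h4 : Real.log ((n:ℝ) / Real.exp 1) = Real.log n - 1 := by
    rw [Real.log_div hn'.ne' (Real.exp_ne_zero 1), Real.log_exp]
  have h6 : Real.log (1 + 1/(n:ℝ)) = Real.log ((n:ℝ)+1) - Real.log n := by
    rw [show (1:ℝ) + 1/(n:ℝ) = ((n:ℝ)+1)/n by field_simp, Real.log_div hn1.ne' hn'.ne']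
  have hcast : ((n+1:ℕ):ℝ) = (n:ℝ) + 1 := by push_cast; ring
  rw [hA1, hA0, hFs, hW1, hW0, hr, hsqrtpi, h6, hcast]
  rw [hsf, h3, h4]
  push_cast
  ring

lemma poly2 (K : ℝ) (hK : 1 ≤ K) :
    1/(12*K) - 2/K^2 - (K/2 + 3/4) * (1/(12*K*(K+1))) - (1/K)/24 ≥ -5/(K*(K+1)) := by
  have h0 : (0:ℝ) < K := by linarith
  have h1 : (0:ℝ) < K + 1 := by linarith
  have e : 1/(12*K) - 2/K^2 - (K/2 + 3/4) * (1/(12*K*(K+1))) - (1/K)/24 - (-5/(K*(K+1))) =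
      (143*K - 96) / (48*K^2*(K+1)) := by
    field_simp
    ring
  have hnum : (0:ℝ) ≤ 143*K - 96 := by linarith
  have hden : (0:ℝ) < 48*K^2*(K+1) := by positivity
  have := div_nonneg hnum hden.le
  linarith [e ▸ this]

lemma delta_ge (n : ℕ) (hn : 1 ≤ n) :
    Real.log (aseq (n+1)) - Real.log (aseq n) ≥ -5/((n:ℝ)*((n:ℝ)+1)) := by
  obtain ⟨m, rfl⟩ : ∃ m, n = m + 1 := ⟨n - 1, by omega⟩
  rw [delta_eq _ hn]
  push_cast
  have hm0 := Nat.cast_nonneg (α := ℝ) m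
  set K : ℝ := (m:ℝ) + 1 with hK
  have hK1 : (1:ℝ) ≤ K := by rw [hK]; linarith
  have hK0 : (0:ℝ) < K := by linarith
  have hs := stirling_lb m
  have hdl := diff_le m
  have hdg := diff_ge m
  rw [← hK] at hs hdl hdg
  have hm2 : (m:ℝ) + 2 = K + 1 := by rw [hK]; ring
  rw [hm2] at hdl
  have hL1 : Real.log (1 + 1/K) ≤ 1/K := by
    have := Real.log_le_sub_one_of_pos (show (0:ℝ) < 1 + 1/K by positivity)
    linarith
  have hL0 : 0 ≤ Real.log (1 + 1/K) := Real.log_nonneg (by nlinarith [one_div_pos.mpr hK0])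
  have hr0 : 0 ≤ Real.log (stirlingSeq (m+1)) - Real.log (stirlingSeq (m+2)) :=
    le_trans (show (0:ℝ) ≤ 1/3 * ((1 / (2 * K + 1)) ^ 2) by positivity) hdg
  have hc : (0:ℝ) ≤ K/2 + 3/4 := by positivity
  have hmul : (K/2 + 3/4) * (Real.log (stirlingSeq (m+1)) - Real.log (stirlingSeq (m+2))) ≤
      (K/2 + 3/4) * (1/(12*K*(K+1))) := by
    apply mul_le_mul_of_nonneg_left _ hc
    rw [show (1:ℝ)/(12*K*(K+1)) = 1/(12*K*(K+1)) from rfl]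
    exact hdl
  have hp := poly2 K hK1
  linarith [hs, hmul, hL1, hL0, hp]

lemma a_lb : ∀ n : ℕ, 1 ≤ n → Real.log (aseq 1) - 5 + 5/(n:ℝ) ≤ Real.log (aseq n) := by
  intro n hn
  induction n, hn using Nat.le_induction with
  | base => norm_num
  | succ n hn ih =>
    have hd := delta_ge n hn
    have hn' : (0:ℝ) < n := by exact_mod_cast hn
    have key : 5/((n:ℝ)+1) = 5/(n:ℝ) - 5/((n:ℝ)*((n:ℝ)+1)) := by
      field_simp
      ring
    push_cast
    rw [key]
    push_cast at ih
    rw [neg_div] at hd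
    linarith

lemma aseq_lower : ∀ n : ℕ, 1 ≤ n → Real.exp (Real.log (aseq 1) - 5) ≤ aseq n := by
  intro n hn
  have h := a_lb n hn
  have hn' : (0:ℝ) < n := by exact_mod_cast hn
  have h5 : (0:ℝ) < 5/(n:ℝ) := by positivity
  calc Real.exp (Real.log (aseq 1) - 5) ≤ Real.exp (Real.log (aseq n)) := by
        apply Real.exp_le_exp.mpr; linarith
    _ = aseq n := Real.exp_log (aseq_pos hn)

lemma glaisher_pos {A : ℝ}
    (hA : Filter.Tendsto (fun n : ℕ =>
      (∏ i ∈ Finset.range n, (Nat.factorial i : ℝ)) *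
        (n : ℝ) ^ (-(n : ℝ) ^ 2 / 2 + 1 / 12) * (2 * Real.pi) ^ (-(n : ℝ) / 2) *
        Real.exp (3 * (n : ℝ) ^ 2 / 4))
    Filter.atTop (nhds (Real.exp (1 / 12) / A))) : 0 < A := by
  have hfun : (fun n : ℕ =>
      (∏ i ∈ Finset.range n, (Nat.factorial i : ℝ)) *
        (n : ℝ) ^ (-(n : ℝ) ^ 2 / 2 + 1 / 12) * (2 * Real.pi) ^ (-(n : ℝ) / 2) *
        Real.exp (3 * (n : ℝ) ^ 2 / 4)) = aseq := by
    funext n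
    simp only [aseq, F, W]
    ring
  rw [hfun] at hA
  have hge : Real.exp (Real.log (aseq 1) - 5) ≤ Real.exp (1/12) / A := by
    apply ge_of_tendsto hA
    filter_upwards [eventually_ge_atTop 1] with n hn
    exact aseq_lower n hn
  have hc : 0 < Real.exp (1/12) / A := lt_of_lt_of_le (Real.exp_pos _) hge
  rcases div_pos_iff.mp hc with ⟨_, h⟩ | ⟨h, _⟩
  · exact h
  · linarith [Real.exp_pos ((1:ℝ)/12)]

end Stmt16

open Dimer Filter Finset Real in
/-- Proposition 7.1, eq. (7.3): `∏_{i=2}^d L(2i) ∼ C_e√d` as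
`d → ∞`, with `C_e = 4/(πC)` and `C = 2^{1/6} e^{1/2} π / A⁶`. -/
theorem statement_16 (A : ℝ) (hA : IsGlaisher A) :
    Filter.Tendsto
      (fun d : ℕ => (∏ i ∈ Finset.Icc 2 d, Lker (2 * (i : ℝ))) / Real.sqrt d)
      Filter.atTop
      (nhds (4 / (Real.pi * ((2 : ℝ) ^ ((1 : ℝ) / 6) * Real.exp (1 / 2) * Real.pi / A ^ 6)))) := by
  classical
  have hApos : 0 < A := Stmt16.glaisher_pos hA
  have hAne : A ≠ 0 := hApos.ne'
  set c : ℝ := Real.exp (1 / 12) / A with hc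
  have hcpos : 0 < c := by rw [hc]; positivity
  have hfun : (fun n : ℕ =>
      (∏ i ∈ Finset.range n, (Nat.factorial i : ℝ)) *
        (n : ℝ) ^ (-(n : ℝ) ^ 2 / 2 + 1 / 12) * (2 * Real.pi) ^ (-(n : ℝ) / 2) *
        Real.exp (3 * (n : ℝ) ^ 2 / 4)) = Stmt16.aseq := by
    funext n
    simp only [Stmt16.aseq, Stmt16.F, Stmt16.W]
    ring
  have hA' : Filter.Tendsto Stmt16.aseq Filter.atTop (nhds c) := by
    rw [← hfun]; exact hA
  have h2 : Filter.Tendsto (fun d : ℕ => 2 * d) Filter.atTop Filter.atTop :=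
    Filter.tendsto_atTop_mono (fun d => by simp only [id_eq]; omega) Filter.tendsto_id
  have h2d : Filter.Tendsto (fun d : ℕ => Stmt16.aseq (2 * d)) Filter.atTop (nhds c) :=
    hA'.comp h2
  have hne : c ^ 8 ≠ 0 := by positivity
  have hlim : Filter.Tendsto
      (fun d : ℕ => Stmt16.aseq (2*d) ^ 2 / Stmt16.aseq d ^ 8 * ((2:ℝ) ^ (-(1:ℝ)/6) * 4 / π ^ 2))
      Filter.atTop (nhds (c ^ 2 / c ^ 8 * ((2:ℝ) ^ (-(1:ℝ)/6) * 4 / π ^ 2))) :=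
    (((h2d.pow 2).div (hA'.pow 8) hne).mul_const _)
  have hval : c ^ 2 / c ^ 8 * ((2:ℝ) ^ (-(1:ℝ)/6) * 4 / π ^ 2) =
      4 / (Real.pi * ((2 : ℝ) ^ ((1 : ℝ) / 6) * Real.exp (1 / 2) * Real.pi / A ^ 6)) := by
    have he : Real.exp ((1:ℝ)/12) ^ (6:ℕ) = Real.exp (1/2) := by
      rw [← Real.exp_nat_mul]; norm_num
    have h2e : (2:ℝ) ^ (-(1:ℝ)/6) = ((2:ℝ) ^ ((1:ℝ)/6))⁻¹ := by
      rw [show -(1:ℝ)/6 = -((1:ℝ)/6) by norm_num, Real.rpow_neg (by norm_num : (0:ℝ) ≤ 2)]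
    have hr6 : ((2:ℝ) ^ ((1:ℝ)/6)) ≠ 0 := (Real.rpow_pos_of_pos (by norm_num) _).ne'
    have hexne : Real.exp ((1:ℝ)/12) ≠ 0 := Real.exp_ne_zero _
    have hexne2 : Real.exp ((1:ℝ)/2) ≠ 0 := Real.exp_ne_zero _
    rw [hc, h2e]
    field_simp
    rw [← he]
  rw [← hval]
  apply Filter.Tendsto.congr' _ hlim
  filter_upwards [Filter.eventually_ge_atTop 1] with d hd
  have := Stmt16.key_eq d hd
  simp only [Stmt16.aseq]
  rw [← this]
end

section
/- As d → ∞, ∏_{i=2}^d U(2i) ∼ C′_e/√d, i.e., lim_{d→∞} √d · ∏_{i=2}^d U(2i) = C′_e, where C′_e = C_e = 4/(πC) and C = 2^{1/6}·e^{1/2}·π/A⁶. -/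
open Filter Finset Real

section Aux
open Dimer Filter Finset Real

noncomputable def Fp (n : ℕ) : ℝ := ∏ i ∈ Finset.range n, (Nat.factorial i : ℝ)

lemma Fp_pos (n : ℕ) : 0 < Fp n := Finset.prod_pos (fun i _ => by positivity)

lemma Fp_succ (n : ℕ) : Fp (n+1) = Fp n * (Nat.factorial n : ℝ) := Finset.prod_range_succ _ _

noncomputable def Gs (n : ℕ) : ℝ :=
  Fp n * (n : ℝ) ^ (-(n : ℝ) ^ 2 / 2 + 1 / 12) * (2 * Real.pi) ^ (-(n : ℝ) / 2) *
    Real.exp (3 * (n : ℝ) ^ 2 / 4)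

lemma Gs_pos (n : ℕ) (hn : 0 < n) : 0 < Gs n := by
  have : (0:ℝ) < (n:ℝ) := by exact_mod_cast hn
  have hπ := Real.pi_pos
  have hF := Fp_pos n
  unfold Gs
  positivity

lemma gamma_nat_add_half (n : ℕ) :
    Real.Gamma ((n : ℝ) + 1/2) = (Nat.factorial (2*n) : ℝ) * Real.sqrt π / (4^n * Nat.factorial n) := by
  induction n with
  | zero => rw [show ((0:ℕ):ℝ) + 1/2 = 1/2 by norm_num, Real.Gamma_one_half_eq]; simp
  | succ n ih =>
    have h0 : ((n : ℝ) + 1/2) ≠ 0 := by positivity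
    have : ((n+1 : ℕ) : ℝ) + 1/2 = ((n : ℝ) + 1/2) + 1 := by push_cast; ring
    rw [this, Real.Gamma_add_one h0, ih]
    have h1 : (2*(n+1)) = (2*n+1)+1 := by ring
    rw [h1, Nat.factorial_succ, Nat.factorial_succ, Nat.factorial_succ]
    push_cast
    have h4 : (0:ℝ) < 4^n := by positivity
    have hf : (0:ℝ) < (Nat.factorial n : ℝ) := by positivity
    field_simp
    ring

lemma Uker_eq (j : ℕ) :
    Uker (2*((j:ℝ)+2)) = ((j:ℝ)+1)/((j:ℝ)+2) * π^2
      * (Nat.factorial (2*j+3) : ℝ)^2 * (Nat.factorial (2*j+2) : ℝ)^2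
      / (4 * 256^(j+1) * (Nat.factorial (j+1) : ℝ)^8) := by
  have e1 : (2*((j:ℝ)+2) - 1)/2 = ((j+1 : ℕ) : ℝ) + 1/2 := by push_cast; ring
  have e2 : (2*((j:ℝ)+2) + 1)/2 = ((j+2 : ℕ) : ℝ) + 1/2 := by push_cast; ring
  have e3 : 2*((j:ℝ)+2)/2 - 1 = ((j : ℕ) : ℝ) + 1 := by push_cast; ring
  have e4 : 2*((j:ℝ)+2)/2 = ((j+1 : ℕ) : ℝ) + 1 := by push_cast; ring
  have e5 : 2*((j:ℝ)+2)/2 + 1 = ((j+2 : ℕ) : ℝ) + 1 := by push_cast; ring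
  rw [Uker, e1, e2, e3, e5, e4, gamma_nat_add_half, gamma_nat_add_half,
    Real.Gamma_nat_eq_factorial, Real.Gamma_nat_eq_factorial, Real.Gamma_nat_eq_factorial]
  have hsq : Real.sqrt π ^ 2 = π := Real.sq_sqrt Real.pi_pos.le
  have hf1 : Nat.factorial (2*(j+2)) = (2*(j+2)) * ((2*j+3) * Nat.factorial (2*j+2)) := by
    rw [show 2*(j+2) = (2*j+3)+1 by ring, Nat.factorial_succ, Nat.factorial_succ]
  have hf2 : Nat.factorial (2*(j+1)) = Nat.factorial (2*j+2) := by congr 1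
  have hf3 : Nat.factorial (2*j+3) = (2*j+3) * Nat.factorial (2*j+2) := Nat.factorial_succ _
  have hf4 : Nat.factorial (j+2) = (j+2) * Nat.factorial (j+1) := Nat.factorial_succ _
  have hf5 : Nat.factorial (j+1) = (j+1) * Nat.factorial j := Nat.factorial_succ _
  rw [hf1, hf2, hf3, hf4, hf5]
  have h1 : (0:ℝ) < (Nat.factorial j : ℝ) := by positivity
  have h2 : (0:ℝ) < (Nat.factorial (2*j+2) : ℝ) := by positivity
  have h3 : (0:ℝ) < (4:ℝ)^j := by positivity
  have h4 : (0:ℝ) < (256:ℝ)^j := by positivity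
  have h5 : (0:ℝ) < (j:ℝ)+1 := by positivity
  have h6 : (0:ℝ) < (j:ℝ)+2 := by positivity
  have h256 : (256:ℝ)^(j+1) = 256 * ((4:ℝ)^j)^4 := by
    rw [← pow_mul, show (256:ℝ) = 4^4 by norm_num, ← pow_mul,
      show 4*(j+1) = j*4+4 by ring, pow_add]
    ring
  have hsq4 : Real.sqrt π ^ 4 = π^2 := by
    rw [show 4 = 2*2 by norm_num, pow_mul, hsq]
  push_cast
  simp only [div_pow, mul_pow, hsq, hsq4, h256, pow_succ]
  field_simp
  ring_nf
  rw [hsq4]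

lemma prod_Uker (m : ℕ) :
    ∏ i ∈ Finset.Icc 2 (m+1), Uker (2*(i:ℝ))
      = π^(2*m) * (Fp (2*m+2))^2 / (((m:ℝ)+1) * 4^m * 16^(m*(m+1)) * (Fp (m+1))^8) := by
  induction m with
  | zero =>
    rw [show Finset.Icc 2 1 = ∅ from rfl]
    norm_num [Fp, Finset.prod_range_succ]
  | succ m ih =>
    rw [Finset.prod_Icc_succ_top (by omega : 2 ≤ m+1+1), ih,
      show ((((m+1+1:ℕ)):ℝ)) = (m:ℝ)+2 by push_cast; ring]
    rw [Uker_eq m]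
    have hFp1 : Fp (2*(m+1)+2) = Fp (2*m+2) * (Nat.factorial (2*m+2) : ℝ) * (Nat.factorial (2*m+3) : ℝ) := by
      rw [show 2*(m+1)+2 = (2*m+3)+1 by ring, Fp_succ, show 2*m+3 = (2*m+2)+1 by ring, Fp_succ]
    have hFp2 : Fp (m+1+1) = Fp (m+1) * (Nat.factorial (m+1) : ℝ) := Fp_succ _
    have h16 : (16:ℝ)^((m+1)*(m+1+1)) = 16^(m*(m+1)) * 256^(m+1) := by
      rw [show (m+1)*(m+1+1) = m*(m+1) + 2*(m+1) by ring, pow_add,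
        show (256:ℝ) = 16^2 by norm_num, ← pow_mul]
    rw [hFp1, hFp2, h16]
    have p1 : (0:ℝ) < Fp (2*m+2) := Fp_pos _
    have p2 : (0:ℝ) < Fp (m+1) := Fp_pos _
    have p3 : (0:ℝ) < (Nat.factorial (2*m+2) : ℝ) := by positivity
    have p4 : (0:ℝ) < (Nat.factorial (2*m+3) : ℝ) := by positivity
    have p5 : (0:ℝ) < (Nat.factorial (m+1) : ℝ) := by positivity
    have p6 : (0:ℝ) < (m:ℝ)+1 := by positivity
    have p7 : (0:ℝ) < (m:ℝ)+2 := by positivity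
    have p8 : (0:ℝ) < (4:ℝ)^m := by positivity
    have p9 : (0:ℝ) < (16:ℝ)^(m*(m+1)) := by positivity
    have p10 : (0:ℝ) < (256:ℝ)^(m+1) := by positivity
    have hπ : (0:ℝ) < π := Real.pi_pos
    rw [pow_succ (4:ℝ) m, show 2*(m+1) = 2*m+2 by ring, pow_add]
    field_simp
    push_cast
    ring

lemma key (m : ℕ) :
    Real.sqrt ((m:ℝ)+1) *
      (π^(2*m) * (Fp (2*m+2))^2 / (((m:ℝ)+1) * 4^m * 16^(m*(m+1)) * (Fp (m+1))^8))
      = (2:ℝ)^((11:ℝ)/6) / π^2 * (Gs (2*(m+1)))^2 / (Gs (m+1))^8 := by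
  have hπ := Real.pi_pos
  have hd : (0:ℝ) < (m:ℝ)+1 := by positivity
  have hF1 : (0:ℝ) < Fp (m+1) := Fp_pos _
  have hF2 : (0:ℝ) < Fp (2*m+2) := Fp_pos _
  have hG2 : Gs (2*(m+1)) = Fp (2*m+2) * (2*((m:ℝ)+1)) ^ (-(2*((m:ℝ)+1)) ^ 2 / 2 + 1 / 12)
      * (2 * π) ^ (-(2*((m:ℝ)+1)) / 2) * Real.exp (3 * (2*((m:ℝ)+1)) ^ 2 / 4) := by
    unfold Gs
    rw [show 2*(m+1) = 2*m+2 from by ring]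
    norm_num
    push_cast
    ring_nf
  have hG1 : Gs (m+1) = Fp (m+1) * (((m:ℝ)+1)) ^ (-(((m:ℝ)+1)) ^ 2 / 2 + 1 / 12)
      * (2 * π) ^ (-(((m:ℝ)+1)) / 2) * Real.exp (3 * (((m:ℝ)+1)) ^ 2 / 4) := by
    unfold Gs; push_cast; ring_nf
  have hL : (0:ℝ) < Real.sqrt ((m:ℝ)+1) *
      (π^(2*m) * (Fp (2*m+2))^2 / (((m:ℝ)+1) * 4^m * 16^(m*(m+1)) * (Fp (m+1))^8)) := by
    positivity
  have hR : (0:ℝ) < (2:ℝ)^((11:ℝ)/6) / π^2 * (Gs (2*(m+1)))^2 / (Gs (m+1))^8 := by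
    rw [hG1, hG2]; positivity
  apply Real.log_injOn_pos (Set.mem_Ioi.mpr hL) (Set.mem_Ioi.mpr hR)
  rw [hG1, hG2]
  have h2 : Real.log 4 = 2 * Real.log 2 := by
    rw [show (4:ℝ) = 2^2 by norm_num, Real.log_pow]; push_cast; ring
  have h16 : Real.log 16 = 4 * Real.log 2 := by
    rw [show (16:ℝ) = 2^4 by norm_num, Real.log_pow]; push_cast; ring
  simp (disch := positivity) only [Real.log_mul, Real.log_div, Real.log_pow, Real.log_rpow,
    Real.log_exp, Real.log_sqrt, Real.sqrt_eq_rpow]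
  rw [h2, h16]
  push_cast
  ring

lemma stirling_tail (k : ℕ) :
    1/(12*((k:ℝ)+2)*((k:ℝ)+3)) ≤
      Real.log (Stirling.stirlingSeq (k+1)) - Real.log (Stirling.stirlingSeq (k+2)) := by
  have h := Stirling.log_stirlingSeq_diff_hasSum k
  have h0 := le_hasSum h 0 (fun j hj => by positivity)
  refine le_trans ?_ h0
  have hk : (0:ℝ) < (k:ℝ)+1 := by positivity
  push_cast
  rw [pow_one, div_pow, one_pow, div_mul_div_comm, one_mul]
  rw [div_le_div_iff₀ (by positivity) (by positivity)]
  nlinarith [sq_nonneg ((k:ℝ))]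

lemma theta_lb (n : ℕ) (hn : 1 ≤ n) :
    1/(12*((n:ℝ)+1)) ≤ Real.log (Stirling.stirlingSeq n) - Real.log (Real.sqrt π) := by
  obtain ⟨k, rfl⟩ : ∃ k, n = k+1 := ⟨n-1, by omega⟩
  have hstep : ∀ N : ℕ, 1/(12*((k:ℝ)+2)) - 1/(12*((k:ℝ)+2+N)) ≤
      Real.log (Stirling.stirlingSeq (k+1)) - Real.log (Stirling.stirlingSeq (k+1+N)) := by
    intro N
    induction N with
    | zero => simp
    | succ N ih =>
      have h2 := stirling_tail (k+N)
      rw [show k+1+(N+1) = k+N+2 from by omega]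
      rw [show k+1+N = k+N+1 from by omega] at ih
      have harith : 1/(12*((k:ℝ)+2+N)) - 1/(12*((k:ℝ)+2+(N+1))) ≤
          1/(12*(((k+N:ℕ):ℝ)+2)*(((k+N:ℕ):ℝ)+3)) := by
        apply le_of_eq
        push_cast
        field_simp
        ring
      push_cast at ih harith h2 ⊢
      linarith
  have hlim1 : Filter.Tendsto (fun N : ℕ => Real.log (Stirling.stirlingSeq (k+1)) -
      Real.log (Stirling.stirlingSeq (k+1+N))) Filter.atTop
      (nhds (Real.log (Stirling.stirlingSeq (k+1)) - Real.log (Real.sqrt π))) := by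
    apply Filter.Tendsto.sub tendsto_const_nhds
    have hπ : Real.sqrt π ≠ 0 := by positivity
    apply (Real.continuousAt_log hπ).tendsto.comp
    apply Stirling.tendsto_stirlingSeq_sqrt_pi.comp
    apply Filter.tendsto_atTop_atTop.mpr
    exact fun b => ⟨b, fun a ha => by omega⟩
  have hlim2 : Filter.Tendsto (fun N : ℕ => 1/(12*((k:ℝ)+2)) - 1/(12*((k:ℝ)+2+N)))
      Filter.atTop (nhds (1/(12*((k:ℝ)+2)) - 0)) := by
    apply Filter.Tendsto.sub tendsto_const_nhds
    apply Filter.Tendsto.div_atTop (tendsto_const_nhds : Filter.Tendsto (fun _ : ℕ => (1:ℝ)) _ _)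
    apply Filter.Tendsto.const_mul_atTop (by norm_num : (0:ℝ) < 12)
    apply Filter.tendsto_atTop_add_const_left
    exact tendsto_natCast_atTop_atTop
  have := le_of_tendsto_of_tendsto' hlim2 hlim1 hstep
  rw [sub_zero] at this
  push_cast
  convert this using 3
  · rfl
  · push_cast; ring

lemma log_succ_ub (n : ℕ) (hn : 2 ≤ n) :
    Real.log ((n:ℝ)+1) - Real.log n ≤
      1/(n:ℝ) - 1/(2*(n:ℝ)^2) + 1/(3*(n:ℝ)^3) + 1/((n:ℝ)^3*((n:ℝ)-1)) := by
  have hx : (2:ℝ) ≤ (n:ℝ) := by exact_mod_cast hn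
  have hx0 : (0:ℝ) < n := by linarith
  set x : ℝ := -(1/(n:ℝ)) with hxdef
  have habs : |x| = 1/(n:ℝ) := by
    rw [hxdef, abs_neg, abs_of_pos (by positivity)]
  have hlt : |x| < 1 := by
    rw [habs]
    rw [div_lt_one hx0]; linarith
  have h := abs_log_sub_add_sum_range_le hlt 3
  have hsum : (∑ i ∈ Finset.range 3, x ^ (i + 1) / (i + 1))
      = -(1/(n:ℝ)) + 1/(2*(n:ℝ)^2) - 1/(3*(n:ℝ)^3) := by
    rw [Finset.sum_range_succ, Finset.sum_range_succ, Finset.sum_range_succ, Finset.sum_range_zero]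
    rw [hxdef]
    push_cast
    field_simp
    ring
  have h1x : 1 - x = ((n:ℝ)+1)/n := by rw [hxdef]; field_simp; ring
  have hlog : Real.log (1-x) = Real.log ((n:ℝ)+1) - Real.log n := by
    rw [h1x, Real.log_div (by positivity) (by positivity)]
  rw [hsum, hlog, habs] at h
  have h2 := (abs_le.mp h).2
  have herr : (1/(n:ℝ))^(3+1) / (1 - 1/(n:ℝ)) = 1/((n:ℝ)^3*((n:ℝ)-1)) := by
    rw [div_pow, one_pow]
    rw [div_div]
    congr 1
    have : (1:ℝ) - 1/(n:ℝ) = ((n:ℝ)-1)/n := by field_simp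
    rw [this]
    field_simp
  rw [herr] at h2
  linarith

lemma log_Gs (n : ℕ) (hn : 1 ≤ n) :
    Real.log (Gs n) = Real.log (Fp n) + (-(n:ℝ)^2/2+1/12)*Real.log n
      + (-(n:ℝ)/2)*(Real.log 2 + Real.log π) + 3*(n:ℝ)^2/4 := by
  have h0 : (0:ℝ) < n := by exact_mod_cast hn
  have hF := Fp_pos n
  have hπ := Real.pi_pos
  unfold Gs
  simp (disch := positivity) only [Real.log_mul, Real.log_rpow, Real.log_exp]

lemma Gstep (n : ℕ) (hn : 2 ≤ n) :
    -(6/(n:ℝ)^2) ≤ Real.log (Gs (n+1)) - Real.log (Gs n) := by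
  have hx : (2:ℝ) ≤ (n:ℝ) := by exact_mod_cast hn
  have hx0 : (0:ℝ) < n := by linarith
  have hπ := Real.pi_pos
  have hs := Stirling.log_stirlingSeq_formula n
  have hfact : Real.log (Nat.factorial n : ℝ) = Real.log (Stirling.stirlingSeq n)
      + 1/2*(Real.log 2 + Real.log n) + (n:ℝ)*(Real.log n - 1) := by
    rw [hs, Real.log_mul two_ne_zero (by positivity),
      Real.log_div (by positivity) (Real.exp_ne_zero 1), Real.log_exp]
    ring
  have hlogGs1 := log_Gs (n+1) (by omega)
  have hlogGs0 := log_Gs n (by omega)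
  have hFp : Real.log (Fp (n+1)) = Real.log (Fp n) + Real.log (Nat.factorial n : ℝ) := by
    rw [Fp_succ, Real.log_mul (ne_of_gt (Fp_pos n)) (by positivity)]
  have hθ := theta_lb n (by omega)
  have hE := log_succ_ub n hn
  have hsqrtπ : Real.log (Real.sqrt π) = Real.log π / 2 := Real.log_sqrt Real.pi_pos.le
  rw [hsqrtπ] at hθ
  rw [hlogGs1, hlogGs0, hFp, hfact]
  push_cast
  -- linear: Δ = θ' + C*(log n - log (n+1)) + n/2 + 3/4, C = (n+1)^2/2 - 1/12
  have hC : (0:ℝ) ≤ ((n:ℝ)+1)^2/2 - 1/12 := by nlinarith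
  have hCE := mul_le_mul_of_nonneg_left hE hC
  have harith : 1/(12*((n:ℝ)+1)) + (n:ℝ)/2 + 3/4 + 6/(n:ℝ)^2
      ≥ (((n:ℝ)+1)^2/2 - 1/12) *
        (1/(n:ℝ) - 1/(2*(n:ℝ)^2) + 1/(3*(n:ℝ)^3) + 1/((n:ℝ)^3*((n:ℝ)-1))) := by
    rw [ge_iff_le, ← sub_nonneg]
    have hx1 : (0:ℝ) < (n:ℝ) - 1 := by linarith
    have e : 1/(12*((n:ℝ)+1)) + (n:ℝ)/2 + 3/4 + 6/(n:ℝ)^2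
        - (((n:ℝ)+1)^2/2 - 1/12) *
          (1/(n:ℝ) - 1/(2*(n:ℝ)^2) + 1/(3*(n:ℝ)^3) + 1/((n:ℝ)^3*((n:ℝ)-1)))
        = ((381/2)*(n:ℝ)^3 - 56*(n:ℝ)^2 - (525/2)*(n:ℝ) - 10)
          / (36*(n:ℝ)^3*((n:ℝ)-1)*((n:ℝ)+1)) := by
      field_simp
      ring
    rw [e]
    apply div_nonneg
    · nlinarith
    · positivity
  linarith

lemma Gs_lb (n : ℕ) (hn : 2 ≤ n) :
    Real.log (Gs 2) - 6*(1 - 1/((n:ℝ)-1)) ≤ Real.log (Gs n) := by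
  induction n, hn using Nat.le_induction with
  | base => norm_num
  | succ n hn ih =>
    have hx : (2:ℝ) ≤ (n:ℝ) := by exact_mod_cast hn
    have h1 := Gstep n hn
    rw [show (6:ℝ)/(n:ℝ)^2 = 6*(1/(n:ℝ)^2) from by ring] at h1
    have harith : 6*(1/((n:ℝ)-1)) - 6*(1/(n:ℝ)^2) ≥ 6*(1/(n:ℝ)) := by
      rw [ge_iff_le, ← sub_nonneg]
      have hne1 : ((n:ℝ)-1) ≠ 0 := ne_of_gt (by linarith)
      have hne2 : ((n:ℝ)) ≠ 0 := ne_of_gt (by linarith)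
      have e : 6*(1/((n:ℝ)-1)) - 6*(1/(n:ℝ)^2) - 6*(1/(n:ℝ))
          = (6*(n:ℝ) - 6*((n:ℝ)-1)) / ((n:ℝ)^2*((n:ℝ)-1)) := by
        field_simp
        ring
      rw [e]
      apply div_nonneg (by linarith)
      nlinarith
    have hcast : ((n+1:ℕ):ℝ) = (n:ℝ)+1 := by push_cast; ring
    rw [hcast]
    have : (n:ℝ)+1-1 = (n:ℝ) := by ring
    rw [this]
    linarith

lemma Gs_not_tendsto_zero : ¬ Filter.Tendsto Gs Filter.atTop (nhds 0) := by
  intro h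
  set c : ℝ := Real.exp (Real.log (Gs 2) - 6) with hc
  have hcpos : 0 < c := Real.exp_pos _
  have hev : ∀ᶠ n in Filter.atTop, Gs n < c := h.eventually_lt_const hcpos
  obtain ⟨n, hn1, hn2⟩ := (hev.and (Filter.eventually_ge_atTop 2)).exists
  have hx : (2:ℝ) ≤ (n:ℝ) := by exact_mod_cast hn2
  have hlb := Gs_lb n hn2
  have h6 : Real.log (Gs 2) - 6 ≤ Real.log (Gs n) := by
    have : 6*(1 - 1/((n:ℝ)-1)) ≤ 6 := by
      have : (0:ℝ) < (n:ℝ)-1 := by linarith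
      have : 0 ≤ 1/((n:ℝ)-1) := by positivity
      linarith
    linarith
  have : c ≤ Gs n := by
    rw [hc]
    calc Real.exp (Real.log (Gs 2) - 6) ≤ Real.exp (Real.log (Gs n)) := Real.exp_le_exp.mpr h6
    _ = Gs n := Real.exp_log (Gs_pos n (by omega))
  linarith

end Aux

open Dimer Filter Finset Real in
/-- Proposition 7.1, eq. (7.4): `∏_{i=2}^d U(2i) ∼ C′_e/√d` as
`d → ∞`, with `C′_e = C_e = 4/(πC)` and `C = 2^{1/6} e^{1/2} π / A⁶`. -/
theorem statement_17 (A : ℝ) (hA : IsGlaisher A) :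
    Filter.Tendsto
      (fun d : ℕ => Real.sqrt d * ∏ i ∈ Finset.Icc 2 d, Uker (2 * (i : ℝ)))
      Filter.atTop
      (nhds (4 / (Real.pi * ((2 : ℝ) ^ ((1 : ℝ) / 6) * Real.exp (1 / 2) * Real.pi / A ^ 6)))) := by
  by_cases hA0 : A = 0
  · exfalso
    have h0 : Filter.Tendsto Gs Filter.atTop (nhds 0) := by
      have h1 : Filter.Tendsto Gs Filter.atTop (nhds (Real.exp (1/12) / A)) := hA
      rw [hA0, div_zero] at h1
      exact h1
    exact Gs_not_tendsto_zero h0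
  · have hπ := Real.pi_pos
    set L0 : ℝ := Real.exp (1/12) / A with hL0
    have hGlim : Filter.Tendsto Gs Filter.atTop (nhds L0) := hA
    have hL0ne : L0 ≠ 0 := by
      simp [hL0, div_ne_zero_iff, Real.exp_ne_zero, hA0]
    have h2lim : Filter.Tendsto (fun m : ℕ => Gs (2*(m+1))) Filter.atTop (nhds L0) := by
      apply hGlim.comp
      apply Filter.tendsto_atTop_atTop.mpr
      exact fun b => ⟨b, fun a ha => by omega⟩
    have h1lim : Filter.Tendsto (fun m : ℕ => Gs (m+1)) Filter.atTop (nhds L0) := by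
      apply hGlim.comp
      apply Filter.tendsto_atTop_atTop.mpr
      exact fun b => ⟨b, fun a ha => by omega⟩
    have hmain : Filter.Tendsto
        (fun m : ℕ => (2:ℝ)^((11:ℝ)/6) / π^2 * (Gs (2*(m+1)))^2 / (Gs (m+1))^8)
        Filter.atTop (nhds ((2:ℝ)^((11:ℝ)/6) / π^2 * L0^2 / L0^8)) :=
      (Filter.Tendsto.mul tendsto_const_nhds (h2lim.pow 2)).div (h1lim.pow 8) (pow_ne_zero _ hL0ne)
    rw [← Filter.tendsto_add_atTop_iff_nat 1]
    have heq : ∀ m : ℕ, Real.sqrt (((m+1:ℕ)):ℝ) * ∏ i ∈ Finset.Icc 2 (m+1), Uker (2*(i:ℝ))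
        = (2:ℝ)^((11:ℝ)/6) / π^2 * (Gs (2*(m+1)))^2 / (Gs (m+1))^8 := by
      intro m
      rw [show (((m+1:ℕ)):ℝ) = (m:ℝ)+1 from by push_cast; ring, prod_Uker m, key m]
    have hval : (2:ℝ)^((11:ℝ)/6) / π^2 * L0^2 / L0^8
        = 4 / (π * ((2:ℝ)^((1:ℝ)/6) * Real.exp (1/2) * π / A^6)) := by
      have h2 : (2:ℝ)^((11:ℝ)/6) * (2:ℝ)^((1:ℝ)/6) = 4 := by
        rw [← Real.rpow_add two_pos, show (11:ℝ)/6+(1:ℝ)/6 = ((2:ℕ):ℝ) by norm_num,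
          Real.rpow_natCast]
        norm_num
      have hexp6 : Real.exp (1/12)^(6:ℕ) = Real.exp (1/2) := by
        rw [← Real.exp_nat_mul]; norm_num
      have hr1 : (0:ℝ) < (2:ℝ)^((11:ℝ)/6) := Real.rpow_pos_of_pos two_pos _
      have hr2 : (0:ℝ) < (2:ℝ)^((1:ℝ)/6) := Real.rpow_pos_of_pos two_pos _
      have hA6 : A^6 ≠ 0 := pow_ne_zero _ hA0
      have hE : Real.exp (1/12) ≠ 0 := Real.exp_ne_zero _
      rw [hL0]
      rw [div_pow, div_pow]
      rw [← hexp6, ← h2]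
      field_simp
    exact (tendsto_congr heq).mpr (hval ▸ hmain)
end
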